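/- arXiv:0803.1873 — 4 statements merged into one kernel-verified Lean document; each statement's English description precedes it below -/
import Mathlib

section
/- Real numbers L_1, L_2, L_3 are the expectation values tr(L_k^{(j)} ρ) of the spin-j operators for some density operator ρ on ℂ^{2j+1} if and only if L_1² + L_2² + L_3² ≤ j². -/
open Matrix
open scoped ComplexOrder

/-- The Levi-Civita symbol on three indices. -/
def leviCivita : Fin 3 → Fin 3 → Fin 3 → ℤ := fun k l m =>
  if (k, l, m) = (0, 1, 2) ∨ (k, l, m) = (1, 2, 0) ∨ (k, l, m) = (2, 0, 1) then 1
  else if (k, l, m) = (0, 2, 1) ∨ (k, l, m) = (2, 1, 0) ∨ (k, l, m) = (1, 0, 2) then -1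
  else 0

/-- trace of a product of PSD matrices is nonneg (in ComplexOrder). -/
lemma trace_mul_psd {n : ℕ} {A B : Matrix (Fin n) (Fin n) ℂ}
    (hA : A.PosSemidef) (hB : B.PosSemidef) : 0 ≤ (A * B).trace := by
  obtain ⟨m, w, hw⟩ := Matrix.posSemidef_iff_eq_sum_vecMulVec.1 hB
  obtain ⟨C, hC⟩ : ∃ C : Matrix (Fin m) (Fin n) ℂ, B = Cᴴ * C :=
    ⟨Matrix.of fun i k => star (w i k), by
      rw [hw]; ext j k; simp [Matrix.mul_apply, Matrix.vecMulVec_apply, Matrix.sum_apply]⟩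
  subst hC
  rw [← Matrix.mul_assoc, Matrix.trace_mul_cycle]
  have hP : (C * A * Cᴴ).PosSemidef := hA.mul_mul_conjTranspose_same C
  rw [Matrix.trace]
  apply Finset.sum_nonneg
  intro i _
  have := hP.dotProduct_mulVec_nonneg (Pi.single i 1)
  simpa [Matrix.mulVec_single, dotProduct, Pi.single_apply, Matrix.diag] using this

lemma psd_smul {n : ℕ} {A : Matrix (Fin n) (Fin n) ℂ} (hA : A.PosSemidef)
    {r : ℝ} (hr : 0 ≤ r) : ((r : ℂ) • A).PosSemidef := by
  rw [Matrix.posSemidef_iff_dotProduct_mulVec]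
  constructor
  · unfold Matrix.IsHermitian
    rw [Matrix.conjTranspose_smul, hA.1.eq]
    congr 1
    simp
  · intro x
    rw [Matrix.smul_mulVec, dotProduct_smul]
    exact mul_nonneg (by simpa using Complex.zero_le_real.2 hr) (hA.dotProduct_mulVec_nonneg x)

/-- If a Hermitian matrix has an eigenvector with real eigenvalue μ, then μ is among
`hA.eigenvalues`. -/
lemma eig_mem {n : ℕ} {A : Matrix (Fin n) (Fin n) ℂ} (hA : A.IsHermitian)
    {x : Fin n → ℂ} (hx : x ≠ 0) {μ : ℝ} (h : A *ᵥ x = (μ : ℂ) • x) :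
    ∃ i, hA.eigenvalues i = μ := by
  set U : Matrix (Fin n) (Fin n) ℂ := hA.eigenvectorUnitary.1 with hU
  have hUU : star U * U = 1 := Unitary.coe_star_mul_self hA.eigenvectorUnitary
  have hUU' : U * star U = 1 := Unitary.coe_mul_star_self hA.eigenvectorUnitary
  have hdiag : star U * A * U = Matrix.diagonal (RCLike.ofReal ∘ hA.eigenvalues) :=
    by have := Matrix.IsHermitian.conjStarAlgAut_star_eigenvectorUnitary hA
       rwa [Unitary.conjStarAlgAut_star_apply] at this
  set y : Fin n → ℂ := star U *ᵥ x with hy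
  have hy0 : y ≠ 0 := by
    intro h0
    apply hx
    have : U *ᵥ y = x := by
      rw [hy, Matrix.mulVec_mulVec, hUU', Matrix.one_mulVec]
    rw [h0, Matrix.mulVec_zero] at this
    exact this.symm
  have hDy : Matrix.diagonal (RCLike.ofReal ∘ hA.eigenvalues) *ᵥ y = (μ : ℂ) • y := by
    have h1 : (star U * A) *ᵥ x = (μ : ℂ) • y := by
      rw [← Matrix.mulVec_mulVec, h, Matrix.mulVec_smul, hy]
    have h2 : (star U * A) *ᵥ x = Matrix.diagonal (RCLike.ofReal ∘ hA.eigenvalues) *ᵥ y := by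
      have heq : star U * A = Matrix.diagonal (RCLike.ofReal ∘ hA.eigenvalues) * star U := by
        calc star U * A = star U * A * (U * star U) := by rw [hUU', Matrix.mul_one]
        _ = (star U * A * U) * star U := by
              rw [Matrix.mul_assoc (star U * A)]
        _ = _ := by rw [hdiag]
      rw [heq, ← Matrix.mulVec_mulVec, hy]
    rw [← h1, h2]
  obtain ⟨i, hi⟩ := Function.ne_iff.1 hy0
  refine ⟨i, ?_⟩
  have hcf := congrFun hDy i
  simp only [Matrix.mulVec_diagonal, Pi.smul_apply, Function.comp_apply, smul_eq_mul] at hcf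
  have : (hA.eigenvalues i : ℂ) = μ := by
    exact mul_right_cancel₀ hi hcf
  exact_mod_cast this

/-- cross-product relation for concrete 3-vectors -/
def IsCross (x y z : Fin 3 → ℝ) : Prop :=
  x 1 * y 2 - x 2 * y 1 = z 0 ∧ x 2 * y 0 - x 0 * y 2 = z 1 ∧ x 0 * y 1 - x 1 * y 0 = z 2

/-- completion of a unit vector in ℝ³ to an oriented orthonormal frame, with the
completeness relations and all three cross-product relations. -/
lemma exists_frame (n : Fin 3 → ℝ) (hn : n 0 ^ 2 + n 1 ^ 2 + n 2 ^ 2 = 1) :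
    ∃ a b : Fin 3 → ℝ,
      (a 0 * a 0 + b 0 * b 0 + n 0 * n 0 = 1) ∧
      (a 0 * a 1 + b 0 * b 1 + n 0 * n 1 = 0) ∧
      (a 0 * a 2 + b 0 * b 2 + n 0 * n 2 = 0) ∧
      (a 1 * a 1 + b 1 * b 1 + n 1 * n 1 = 1) ∧
      (a 1 * a 2 + b 1 * b 2 + n 1 * n 2 = 0) ∧
      (a 2 * a 2 + b 2 * b 2 + n 2 * n 2 = 1) ∧
      IsCross a b n ∧ IsCross n a b ∧ IsCross n b (-a) := by
  obtain ⟨a, ha, hp⟩ : ∃ a : Fin 3 → ℝ,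
      (a 0 ^ 2 + a 1 ^ 2 + a 2 ^ 2 = 1) ∧ (a 0 * n 0 + a 1 * n 1 + a 2 * n 2 = 0) := by
    by_cases h01 : n 0 = 0 ∧ n 1 = 0
    · exact ⟨![1, 0, 0], by norm_num; rfl, by simp [h01.1]⟩
    · set s : ℝ := n 0 ^ 2 + n 1 ^ 2 with hs
      have hspos : 0 < s := by
        rcases not_and_or.1 h01 with h | h <;> positivity
      set r : ℝ := Real.sqrt s with hr
      have hrpos : 0 < r := Real.sqrt_pos.2 hspos
      have hr2 : r ^ 2 = s := Real.sq_sqrt hspos.le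
      refine ⟨![-(n 1) / r, n 0 / r, 0], ?_, ?_⟩
      · simp only [Matrix.cons_val_zero, Matrix.cons_val_one, Matrix.cons_val_two, Matrix.head_cons,
          Matrix.tail_cons]
        field_simp
        linarith [hr2]
      · simp only [Matrix.cons_val_zero, Matrix.cons_val_one, Matrix.cons_val_two, Matrix.head_cons,
          Matrix.tail_cons]
        field_simp
        ring
  refine ⟨a, ![n 1 * a 2 - n 2 * a 1, n 2 * a 0 - n 0 * a 2, n 0 * a 1 - n 1 * a 0],
    ?_, ?_, ?_, ?_, ?_, ?_, ⟨?_, ?_, ?_⟩, ⟨by simp, by simp, by simp⟩, ⟨?_, ?_, ?_⟩⟩ <;>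
    simp only [Matrix.cons_val_zero, Matrix.cons_val_one, Matrix.head_cons,
      Matrix.cons_val_two, Matrix.tail_cons, Pi.neg_apply]
  · linear_combination (1 - n 0 * n 0) * ha + (a 0^2 + a 1^2 + a 2^2 - a 0 * a 0) * hn +
      (-(a 0*n 0 + a 1*n 1 + a 2*n 2) + n 0*a 0 + a 0*n 0) * hp
  · linear_combination (- n 0 * n 1) * ha + (- a 0 * a 1) * hn + (n 0*a 1 + a 0*n 1) * hp
  · linear_combination (- n 0 * n 2) * ha + (- a 0 * a 2) * hn + (n 0*a 2 + a 0*n 2) * hp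
  · linear_combination (1 - n 1 * n 1) * ha + (a 0^2 + a 1^2 + a 2^2 - a 1 * a 1) * hn +
      (-(a 0*n 0 + a 1*n 1 + a 2*n 2) + n 1*a 1 + a 1*n 1) * hp
  · linear_combination (- n 1 * n 2) * ha + (- a 1 * a 2) * hn + (n 1*a 2 + a 1*n 2) * hp
  · linear_combination (1 - n 2 * n 2) * ha + (a 0^2 + a 1^2 + a 2^2 - a 2 * a 2) * hn +
      (-(a 0*n 0 + a 1*n 1 + a 2*n 2) + n 2*a 2 + a 2*n 2) * hp
  · linear_combination n 0 * ha - a 0 * hp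
  · linear_combination n 1 * ha - a 1 * hp
  · linear_combination n 2 * ha - a 2 * hp
  · linear_combination n 0 * hp - a 0 * hn
  · linear_combination n 1 * hp - a 1 * hn
  · linear_combination n 2 * hp - a 2 * hn

noncomputable def Mdot {d : ℕ} (L : Fin 3 → Matrix (Fin d) (Fin d) ℂ) (c : Fin 3 → ℝ) :
    Matrix (Fin d) (Fin d) ℂ :=
  (c 0 : ℂ) • L 0 + (c 1 : ℂ) • L 1 + (c 2 : ℂ) • L 2

section
variable {d : ℕ} {L : Fin 3 → Matrix (Fin d) (Fin d) ℂ}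
  (c01 : L 0 * L 1 - L 1 * L 0 = Complex.I • L 2)
  (c12 : L 1 * L 2 - L 2 * L 1 = Complex.I • L 0)
  (c20 : L 2 * L 0 - L 0 * L 2 = Complex.I • L 1)

lemma Mdot_herm (herm : ∀ k, (L k).IsHermitian) (c : Fin 3 → ℝ) :
    (Mdot L c).IsHermitian := by
  unfold Matrix.IsHermitian Mdot
  simp only [conjTranspose_add, conjTranspose_smul, (herm 0).eq, (herm 1).eq, (herm 2).eq]
  simp [Complex.star_def, Complex.conj_ofReal]

include c01 c12 c20 in
lemma Mdot_comm_cross {x y z : Fin 3 → ℝ}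
    (h0 : x 1 * y 2 - x 2 * y 1 = z 0) (h1 : x 2 * y 0 - x 0 * y 2 = z 1)
    (h2 : x 0 * y 1 - x 1 * y 0 = z 2) :
    Mdot L x * Mdot L y - Mdot L y * Mdot L x = Complex.I • Mdot L z := by
  have hL10 : L 1 * L 0 = L 0 * L 1 - Complex.I • L 2 := by rw [← c01, sub_sub_cancel]
  have hL21 : L 2 * L 1 = L 1 * L 2 - Complex.I • L 0 := by rw [← c12, sub_sub_cancel]
  have hL02 : L 0 * L 2 = L 2 * L 0 - Complex.I • L 1 := by rw [← c20, sub_sub_cancel]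
  have h0c : (x 1 : ℂ) * y 2 - x 2 * y 1 = z 0 := by exact_mod_cast congrArg Complex.ofReal h0
  have h1c : (x 2 : ℂ) * y 0 - x 0 * y 2 = z 1 := by exact_mod_cast congrArg Complex.ofReal h1
  have h2c : (x 0 : ℂ) * y 1 - x 1 * y 0 = z 2 := by exact_mod_cast congrArg Complex.ofReal h2
  unfold Mdot
  simp only [add_mul, mul_add, smul_mul_assoc, mul_smul_comm, smul_smul, smul_add]
  rw [hL10, hL21, hL02]
  match_scalars <;>
    first
      | ring1
      | linear_combination Complex.I * h0c
      | linear_combination Complex.I * h1c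
      | linear_combination Complex.I * h2c

include c01 c12 c20 in
lemma Mdot_casimir_frame {x y z : Fin 3 → ℝ}
    (e00 : x 0 * x 0 + y 0 * y 0 + z 0 * z 0 = 1)
    (e01 : x 0 * x 1 + y 0 * y 1 + z 0 * z 1 = 0)
    (e02 : x 0 * x 2 + y 0 * y 2 + z 0 * z 2 = 0)
    (e11 : x 1 * x 1 + y 1 * y 1 + z 1 * z 1 = 1)
    (e12 : x 1 * x 2 + y 1 * y 2 + z 1 * z 2 = 0)
    (e22 : x 2 * x 2 + y 2 * y 2 + z 2 * z 2 = 1) :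
    Mdot L x * Mdot L x + Mdot L y * Mdot L y + Mdot L z * Mdot L z
      = L 0 * L 0 + L 1 * L 1 + L 2 * L 2 := by
  have hL10 : L 1 * L 0 = L 0 * L 1 - Complex.I • L 2 := by rw [← c01, sub_sub_cancel]
  have hL21 : L 2 * L 1 = L 1 * L 2 - Complex.I • L 0 := by rw [← c12, sub_sub_cancel]
  have hL02 : L 0 * L 2 = L 2 * L 0 - Complex.I • L 1 := by rw [← c20, sub_sub_cancel]
  have e00c : (x 0:ℂ) * x 0 + y 0 * y 0 + z 0 * z 0 = 1 := by exact_mod_cast congrArg Complex.ofReal e00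
  have e01c : (x 0:ℂ) * x 1 + y 0 * y 1 + z 0 * z 1 = 0 := by exact_mod_cast congrArg Complex.ofReal e01
  have e02c : (x 0:ℂ) * x 2 + y 0 * y 2 + z 0 * z 2 = 0 := by exact_mod_cast congrArg Complex.ofReal e02
  have e11c : (x 1:ℂ) * x 1 + y 1 * y 1 + z 1 * z 1 = 1 := by exact_mod_cast congrArg Complex.ofReal e11
  have e12c : (x 1:ℂ) * x 2 + y 1 * y 2 + z 1 * z 2 = 0 := by exact_mod_cast congrArg Complex.ofReal e12
  have e22c : (x 2:ℂ) * x 2 + y 2 * y 2 + z 2 * z 2 = 1 := by exact_mod_cast congrArg Complex.ofReal e22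
  unfold Mdot
  simp only [add_mul, mul_add, smul_mul_assoc, mul_smul_comm, smul_smul, smul_add]
  rw [hL10, hL21, hL02]
  match_scalars <;>
    first
      | ring1
      | linear_combination e00c
      | linear_combination e11c
      | linear_combination e22c
      | linear_combination 2 * e01c
      | linear_combination 2 * e02c
      | linear_combination 2 * e12c
      | linear_combination (-Complex.I) * e01c
      | linear_combination (-Complex.I) * e02c
      | linear_combination (-Complex.I) * e12c

lemma Mdot_expand {x y z : Fin 3 → ℝ} (k : Fin 3)
    (ek0 : x k * x 0 + y k * y 0 + z k * z 0 = if k = 0 then 1 else 0)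
    (ek1 : x k * x 1 + y k * y 1 + z k * z 1 = if k = 1 then 1 else 0)
    (ek2 : x k * x 2 + y k * y 2 + z k * z 2 = if k = 2 then 1 else 0) :
    (x k : ℂ) • Mdot L x + (y k : ℂ) • Mdot L y + (z k : ℂ) • Mdot L z = L k := by
  unfold Mdot
  have e0 : ((x k * x 0 + y k * y 0 + z k * z 0 : ℝ) : ℂ) = if k = 0 then 1 else 0 := by
    rw [ek0]; split <;> norm_num
  have e1 : ((x k * x 1 + y k * y 1 + z k * z 1 : ℝ) : ℂ) = if k = 1 then 1 else 0 := by
    rw [ek1]; split <;> norm_num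
  have e2 : ((x k * x 2 + y k * y 2 + z k * z 2 : ℝ) : ℂ) = if k = 2 then 1 else 0 := by
    rw [ek2]; split <;> norm_num
  push_cast at e0 e1 e2
  have hLk : L k = (if k = 0 then (1:ℂ) else 0) • L 0 + (if k = 1 then (1:ℂ) else 0) • L 1
      + (if k = 2 then (1:ℂ) else 0) • L 2 := by
    fin_cases k <;> simp
  rw [hLk, ← e0, ← e1, ← e2]
  match_scalars <;> ring1

end

set_option maxHeartbeats 2000000 in
/-- First moment problem: real numbers `L₁, L₂, L₃` are the expectation values
`tr(L_k^{(j)} ρ)` of the spin-`j` operators (here `j = ℓ/2`, dimension `ℓ+1`) for some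
density operator `ρ` if and only if `L₁² + L₂² + L₃² ≤ j²`. -/
theorem first_moment_problem (ℓ : ℕ) (L : Fin 3 → Matrix (Fin (ℓ + 1)) (Fin (ℓ + 1)) ℂ)
    (herm : ∀ k, (L k).IsHermitian)
    (comm : ∀ k l, L k * L l - L l * L k =
      Complex.I • ∑ m, (leviCivita k l m : ℂ) • L m)
    (casimir : ∑ k, L k * L k
      = ((((ℓ : ℝ) / 2) * ((ℓ : ℝ) / 2 + 1) : ℝ) : ℂ) • (1 : Matrix (Fin (ℓ + 1)) (Fin (ℓ + 1)) ℂ))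
    (irred : ∀ X : Matrix (Fin (ℓ + 1)) (Fin (ℓ + 1)) ℂ,
      (∀ k, X * L k = L k * X) → ∃ c : ℂ, X = c • (1 : Matrix (Fin (ℓ + 1)) (Fin (ℓ + 1)) ℂ))
    (v : Fin 3 → ℝ) :
    (∃ ρ : Matrix (Fin (ℓ + 1)) (Fin (ℓ + 1)) ℂ, ρ.PosSemidef ∧ ρ.trace = 1 ∧
        ∀ k, (L k * ρ).trace = ((v k : ℝ) : ℂ))
      ↔ ∑ k, (v k) ^ 2 ≤ ((ℓ : ℝ) / 2) ^ 2 := by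
  have hj0 : (0:ℝ) ≤ (ℓ:ℝ)/2 := by positivity
  -- the three basic commutators
  have c01 : L 0 * L 1 - L 1 * L 0 = Complex.I • L 2 := by
    have h := comm 0 1; rw [Fin.sum_univ_three] at h
    simpa [show leviCivita 0 1 0 = (0) from by decide,
      show leviCivita 0 1 1 = (0) from by decide,
      show leviCivita 0 1 2 = (1) from by decide] using h
  have c12 : L 1 * L 2 - L 2 * L 1 = Complex.I • L 0 := by
    have h := comm 1 2; rw [Fin.sum_univ_three] at h
    simpa [show leviCivita 1 2 0 = (1) from by decide,
      show leviCivita 1 2 1 = (0) from by decide,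
      show leviCivita 1 2 2 = (0) from by decide] using h
  have c20 : L 2 * L 0 - L 0 * L 2 = Complex.I • L 1 := by
    have h := comm 2 0; rw [Fin.sum_univ_three] at h
    simpa [show leviCivita 2 0 0 = (0) from by decide,
      show leviCivita 2 0 1 = (1) from by decide,
      show leviCivita 2 0 2 = (0) from by decide] using h
  -- traces of the generators vanish
  have trace_of_comm : ∀ {X Y Z : Matrix (Fin (ℓ+1)) (Fin (ℓ+1)) ℂ},
      X * Y - Y * X = Complex.I • Z → Z.trace = 0 := by
    intro X Y Z h
    have := congrArg Matrix.trace h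
    rw [trace_sub, trace_mul_comm, sub_self, trace_smul] at this
    have := this.symm
    rw [smul_eq_mul, mul_eq_zero] at this
    rcases this with h' | h'
    · exact absurd h' Complex.I_ne_zero
    · exact h'
  have trL0 : (L 0).trace = 0 := trace_of_comm c12
  have trL1 : (L 1).trace = 0 := trace_of_comm c20
  have trL2 : (L 2).trace = 0 := trace_of_comm c01
  have casimir3 : L 0 * L 0 + L 1 * L 1 + L 2 * L 2
      = ((((ℓ : ℝ) / 2) * ((ℓ : ℝ) / 2 + 1) : ℝ) : ℂ) • 1 := by
    rw [← casimir, Fin.sum_univ_three]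
  set Cr : ℝ := ((ℓ : ℝ) / 2) * ((ℓ : ℝ) / 2 + 1) with hCr
  rw [Fin.sum_univ_three]
  constructor
  · rintro ⟨ρ, hρpsd, hρtr, hρv⟩
    by_cases hS : v 0 ^ 2 + v 1 ^ 2 + v 2 ^ 2 = 0
    · rw [hS]; positivity
    · have hSpos : 0 < v 0 ^ 2 + v 1 ^ 2 + v 2 ^ 2 :=
        lt_of_le_of_ne (by positivity) (Ne.symm hS)
      set s : ℝ := Real.sqrt (v 0 ^ 2 + v 1 ^ 2 + v 2 ^ 2) with hsdef
      have hspos : 0 < s := Real.sqrt_pos.2 hSpos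
      have hs2 : s ^ 2 = v 0 ^ 2 + v 1 ^ 2 + v 2 ^ 2 := Real.sq_sqrt hSpos.le
      set n : Fin 3 → ℝ := fun k => v k / s with hndef
      have hn : n 0 ^ 2 + n 1 ^ 2 + n 2 ^ 2 = 1 := by
        simp only [hndef]
        field_simp
        linarith [hs2]
      obtain ⟨a, b, e00, e01, e02, e11, e12, e22, hab, hna, hnb⟩ := exists_frame n hn
      set Ma := Mdot L a with hMa
      set Mb := Mdot L b with hMb
      set Mn := Mdot L n with hMn
      obtain ⟨hx0, hx1, hx2⟩ := hab
      have hcomm_ab : Ma * Mb - Mb * Ma = Complex.I • Mn :=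
        Mdot_comm_cross c01 c12 c20 hx0 hx1 hx2
      have hframe : Ma * Ma + Mb * Mb + Mn * Mn = ((Cr:ℝ):ℂ) • 1 :=
        (Mdot_casimir_frame c01 c12 c20 e00 e01 e02 e11 e12 e22).trans casimir3
      have hAH : (Ma + Complex.I • Mb)ᴴ = Ma - Complex.I • Mb := by
        rw [conjTranspose_add, conjTranspose_smul, (Mdot_herm herm a).eq, (Mdot_herm herm b).eq]
        simp [Complex.star_def, Complex.conj_I, sub_eq_add_neg, neg_smul]
        rfl
      have hAHA : (Ma - Complex.I • Mb) * (Ma + Complex.I • Mb)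
          = ((Cr:ℝ):ℂ) • 1 - Mn * Mn - Mn := by
        have h1 : Ma * Ma + Mb * Mb = ((Cr:ℝ):ℂ) • 1 - Mn * Mn := by
          rw [← hframe]; abel
        calc (Ma - Complex.I • Mb) * (Ma + Complex.I • Mb)
            = Ma * Ma + Mb * Mb + Complex.I • (Ma * Mb - Mb * Ma) := by
              simp only [sub_mul, mul_add, mul_smul_comm, smul_mul_assoc, smul_sub,
                smul_smul, Complex.I_mul_I, neg_one_smul, smul_add]
              abel
          _ = (((Cr:ℝ):ℂ) • 1 - Mn * Mn) + Complex.I • (Complex.I • Mn) := by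
              rw [h1, hcomm_ab]
          _ = ((Cr:ℝ):ℂ) • 1 - Mn * Mn - Mn := by
              rw [smul_smul, Complex.I_mul_I, neg_one_smul]; abel
      have hPSD1 : (((Cr:ℝ):ℂ) • 1 - Mn * Mn - Mn).PosSemidef := by
        have h := Matrix.posSemidef_conjTranspose_mul_self (Ma + Complex.I • Mb)
        rwa [hAH, hAHA] at h
      have hr : (Mn * ρ).trace = (s : ℂ) := by
        have hexp : Mn * ρ = (n 0:ℂ) • (L 0 * ρ) + (n 1:ℂ) • (L 1 * ρ) + (n 2:ℂ) • (L 2 * ρ) := by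
          simp only [hMn, Mdot, add_mul, smul_mul_assoc]
        rw [hexp, trace_add, trace_add, trace_smul, trace_smul, trace_smul,
          hρv 0, hρv 1, hρv 2]
        have hnum : n 0 * v 0 + n 1 * v 1 + n 2 * v 2 = s := by
          simp only [hndef]
          field_simp
          linarith [hs2]
        push_cast [smul_eq_mul]
        exact_mod_cast congrArg Complex.ofReal hnum
      have hBH : (Mn - (s:ℂ) • 1)ᴴ = Mn - (s:ℂ) • 1 := by
        rw [conjTranspose_sub, conjTranspose_smul, (Mdot_herm herm n).eq, conjTranspose_one]
        simp [Complex.star_def, Complex.conj_ofReal]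
        rfl
      have hBB : (Mn - (s:ℂ) • 1)ᴴ * (Mn - (s:ℂ) • 1)
          = Mn * Mn - ((2*s:ℝ):ℂ) • Mn + ((s^2:ℝ):ℂ) • 1 := by
        rw [hBH]
        simp only [sub_mul, mul_sub, smul_mul_assoc, mul_smul_comm, one_mul, mul_one,
          smul_smul]
        push_cast
        module
      have hPSD2 : (Mn * Mn - ((2*s:ℝ):ℂ) • Mn + ((s^2:ℝ):ℂ) • 1).PosSemidef := by
        have h := Matrix.posSemidef_conjTranspose_mul_self (Mn - (s:ℂ) • 1)
        rwa [hBB] at h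
      have h1 := trace_mul_psd hPSD1 hρpsd
      have h2 := trace_mul_psd hPSD2 hρpsd
      have ht1 : ((((Cr:ℝ):ℂ) • 1 - Mn * Mn - Mn) * ρ).trace
          = ((Cr:ℝ):ℂ) - (Mn * Mn * ρ).trace - (s:ℂ) := by
        rw [sub_mul, sub_mul, smul_mul_assoc, one_mul, trace_sub, trace_sub, trace_smul,
          hρtr, hr, Matrix.mul_assoc]
        rw [smul_eq_mul, mul_one, ← Matrix.mul_assoc]
      have ht2 : ((Mn * Mn - ((2*s:ℝ):ℂ) • Mn + ((s^2:ℝ):ℂ) • 1) * ρ).trace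
          = (Mn * Mn * ρ).trace - ((2*s:ℝ):ℂ) * (s:ℂ) + ((s^2:ℝ):ℂ) := by
        rw [add_mul, sub_mul, smul_mul_assoc, smul_mul_assoc, one_mul, trace_add, trace_sub,
          trace_smul, trace_smul, hρtr, hr]
        rw [smul_eq_mul, smul_eq_mul, mul_one]
      have hsum : (0:ℂ) ≤ ((Cr - s - s^2 : ℝ):ℂ) := by
        have hadd := add_nonneg h1 h2
        rw [ht1, ht2] at hadd
        convert hadd using 1
        push_cast
        ring
      have hineq : s^2 + s ≤ Cr := by
        have := Complex.zero_le_real.mp hsum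
        linarith
    -- from s² + s ≤ j(j+1), s ≥ 0, j ≥ 0 get s² ≤ j²
      nlinarith [hspos.le, hj0, hs2]
  · intro hle
    by_cases hS : v 0 ^ 2 + v 1 ^ 2 + v 2 ^ 2 = 0
    · -- maximally mixed state
      have hv0 : v 0 = 0 := by nlinarith [sq_nonneg (v 0), sq_nonneg (v 1), sq_nonneg (v 2)]
      have hv1 : v 1 = 0 := by nlinarith [sq_nonneg (v 0), sq_nonneg (v 1), sq_nonneg (v 2)]
      have hv2 : v 2 = 0 := by nlinarith [sq_nonneg (v 0), sq_nonneg (v 1), sq_nonneg (v 2)]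
      refine ⟨(((((ℓ:ℝ)+1)⁻¹ : ℝ)) : ℂ) • (1 : Matrix (Fin (ℓ+1)) (Fin (ℓ+1)) ℂ),
        psd_smul Matrix.PosSemidef.one (by positivity), ?_, ?_⟩
      · rw [trace_smul, trace_one, smul_eq_mul, Fintype.card_fin]
        push_cast
        field_simp
      · intro k
        rw [mul_smul_comm, trace_smul, mul_one, smul_eq_mul]
        have hk : (L k).trace = 0 := by
          fin_cases k
          · exact trL0
          · exact trL1
          · exact trL2
        rw [hk, mul_zero]
        have : v k = 0 := by fin_cases k <;> assumption
        rw [this]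
        norm_num
    · have hSpos : 0 < v 0 ^ 2 + v 1 ^ 2 + v 2 ^ 2 :=
        lt_of_le_of_ne (by positivity) (Ne.symm hS)
      set s : ℝ := Real.sqrt (v 0 ^ 2 + v 1 ^ 2 + v 2 ^ 2) with hsdef
      have hspos : 0 < s := Real.sqrt_pos.2 hSpos
      have hs2 : s ^ 2 = v 0 ^ 2 + v 1 ^ 2 + v 2 ^ 2 := Real.sq_sqrt hSpos.le
      have hjpos : 0 < (ℓ:ℝ)/2 := by nlinarith
      have hsj : s ≤ (ℓ:ℝ)/2 := by nlinarith
      set n : Fin 3 → ℝ := fun k => v k / s with hndef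
      have hn : n 0 ^ 2 + n 1 ^ 2 + n 2 ^ 2 = 1 := by
        simp only [hndef]
        field_simp
        linarith [hs2]
      obtain ⟨a, b, e00, e01, e02, e11, e12, e22, hab, hna, hnb⟩ := exists_frame n hn
      set Ma := Mdot L a with hMa
      set Mb := Mdot L b with hMb
      set Mn := Mdot L n with hMnd
      obtain ⟨hx0, hx1, hx2⟩ := hab
      obtain ⟨hy0, hy1, hy2⟩ := hna
      obtain ⟨hz0, hz1, hz2⟩ := hnb
      have hcomm_ab : Ma * Mb - Mb * Ma = Complex.I • Mn :=
        Mdot_comm_cross c01 c12 c20 hx0 hx1 hx2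
      have hcomm_na : Mn * Ma - Ma * Mn = Complex.I • Mb :=
        Mdot_comm_cross c01 c12 c20 hy0 hy1 hy2
      have hcomm_nb : Mn * Mb - Mb * Mn = Complex.I • Mdot L (-a) :=
        Mdot_comm_cross c01 c12 c20 hz0 hz1 hz2
      have hMdotneg : Mdot L (-a) = -Ma := by
        rw [hMa]
        unfold Mdot
        simp only [Pi.neg_apply, Complex.ofReal_neg, neg_smul]
        abel
      rw [hMdotneg] at hcomm_nb
      have hframe : Ma * Ma + Mb * Mb + Mn * Mn = ((Cr:ℝ):ℂ) • 1 :=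
        (Mdot_casimir_frame c01 c12 c20 e00 e01 e02 e11 e12 e22).trans casimir3
      have hAH : (Ma + Complex.I • Mb)ᴴ = Ma - Complex.I • Mb := by
        rw [conjTranspose_add, conjTranspose_smul, (Mdot_herm herm a).eq, (Mdot_herm herm b).eq]
        simp [Complex.star_def, Complex.conj_I, sub_eq_add_neg, neg_smul]
        rfl
      have hAHA : (Ma - Complex.I • Mb) * (Ma + Complex.I • Mb)
          = ((Cr:ℝ):ℂ) • 1 - Mn * Mn - Mn := by
        have h1 : Ma * Ma + Mb * Mb = ((Cr:ℝ):ℂ) • 1 - Mn * Mn := by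
          rw [← hframe]; abel
        calc (Ma - Complex.I • Mb) * (Ma + Complex.I • Mb)
            = Ma * Ma + Mb * Mb + Complex.I • (Ma * Mb - Mb * Ma) := by
              simp only [sub_mul, mul_add, mul_smul_comm, smul_mul_assoc, smul_sub,
                smul_smul, Complex.I_mul_I, neg_one_smul, smul_add]
              abel
          _ = (((Cr:ℝ):ℂ) • 1 - Mn * Mn) + Complex.I • (Complex.I • Mn) := by
              rw [h1, hcomm_ab]
          _ = ((Cr:ℝ):ℂ) • 1 - Mn * Mn - Mn := by
              rw [smul_smul, Complex.I_mul_I, neg_one_smul]; abel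
      have hMnherm : Mn.IsHermitian := Mdot_herm herm n
      -- pick the maximal eigenvalue
      obtain ⟨i₀, -, hmax⟩ := Finset.exists_max_image Finset.univ hMnherm.eigenvalues
        ⟨0, Finset.mem_univ 0⟩
      set lam : ℝ := hMnherm.eigenvalues i₀ with hlamdef
      set ψ : Fin (ℓ+1) → ℂ := ⇑(hMnherm.eigenvectorBasis i₀) with hψdef
      have hψeig : Mn *ᵥ ψ = (lam:ℂ) • ψ := by
        have h := hMnherm.mulVec_eigenvectorBasis i₀
        funext i
        have := congrFun h i
        simpa [Complex.real_smul] using this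
      have hψne : ψ ≠ 0 := by
        intro h0
        exact hMnherm.eigenvectorBasis.orthonormal.ne_zero i₀ (by ext i; exact congrFun h0 i)
      have hψnorm : dotProduct (star ψ) ψ = 1 := by
        have hn1 := hMnherm.eigenvectorBasis.orthonormal.1 i₀
        have hinner : (inner ℂ (hMnherm.eigenvectorBasis i₀) (hMnherm.eigenvectorBasis i₀) : ℂ)
            = 1 := by
          rw [inner_self_eq_norm_sq_to_K, hn1]
          norm_num
        rw [EuclideanSpace.inner_eq_star_dotProduct, dotProduct_comm] at hinner
        exact hinner
      -- the ladder operator kills the top eigenvector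
      have hladder : Mn * (Ma + Complex.I • Mb) - (Ma + Complex.I • Mb) * Mn
          = Ma + Complex.I • Mb := by
        have hsplit : Mn * (Ma + Complex.I • Mb) - (Ma + Complex.I • Mb) * Mn
            = (Mn * Ma - Ma * Mn) + Complex.I • (Mn * Mb - Mb * Mn) := by
          simp only [mul_add, add_mul, mul_smul_comm, smul_mul_assoc, smul_sub]
          abel
        rw [hsplit, hcomm_na, hcomm_nb]
        simp only [smul_neg, smul_smul, Complex.I_mul_I, neg_one_smul, neg_neg]
        abel
      set A := Ma + Complex.I • Mb with hAdef
      have hAψ : A *ᵥ ψ = 0 := by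
        by_contra hne
        have hMA : Mn * A = A + A * Mn := eq_add_of_sub_eq hladder
        have hstep : Mn *ᵥ (A *ᵥ ψ) = ((lam + 1 : ℝ):ℂ) • (A *ᵥ ψ) := by
          rw [Matrix.mulVec_mulVec, hMA, Matrix.add_mulVec, ← Matrix.mulVec_mulVec, hψeig,
            Matrix.mulVec_smul]
          push_cast
          rw [add_smul, one_smul]
          abel
        obtain ⟨i, hi⟩ := eig_mem hMnherm hne hstep
        have := hmax i (Finset.mem_univ i)
        rw [hi] at this
        linarith
      -- the top eigenvalue is j
      have hlam_eq : Cr = lam ^ 2 + lam := by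
        have h0 : ((Ma - Complex.I • Mb) * A) *ᵥ ψ = 0 := by
          rw [← Matrix.mulVec_mulVec, hAψ, Matrix.mulVec_zero]
        rw [hAHA] at h0
        have hexp : (((Cr:ℝ):ℂ) • 1 - Mn * Mn - Mn) *ᵥ ψ
            = ((Cr - lam^2 - lam : ℝ):ℂ) • ψ := by
          rw [Matrix.sub_mulVec, Matrix.sub_mulVec, Matrix.smul_mulVec,
            Matrix.one_mulVec, ← Matrix.mulVec_mulVec, hψeig, Matrix.mulVec_smul, hψeig]
          push_cast
          rw [smul_smul]
          module
        rw [hexp] at h0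
        rcases smul_eq_zero.mp h0 with h' | h'
        · have : (Cr - lam^2 - lam : ℝ) = 0 := by exact_mod_cast h'
          linarith
        · exact absurd h' hψne
      have hlam0 : 0 ≤ lam := by
        have htrMn : Mn.trace = 0 := by
          rw [hMnd]
          unfold Mdot
          rw [trace_add, trace_add, trace_smul, trace_smul, trace_smul, trL0, trL1, trL2]
          simp
        have htr_eig : Mn.trace = ∑ i, (hMnherm.eigenvalues i : ℂ) := by
          conv_lhs => rw [hMnherm.spectral_theorem, Unitary.conjStarAlgAut_apply]
          rw [trace_mul_cycle,
            Unitary.coe_star_mul_self hMnherm.eigenvectorUnitary, Matrix.one_mul]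
          rw [trace_diagonal]
          rfl
        have hsum0 : ∑ i, hMnherm.eigenvalues i = 0 := by
          have : ((∑ i, hMnherm.eigenvalues i : ℝ) : ℂ) = 0 := by
            push_cast
            rw [← htr_eig, htrMn]
          exact_mod_cast this
        by_contra hneg
        push_neg at hneg
        have hall : ∀ i ∈ Finset.univ, hMnherm.eigenvalues i < 0 :=
          fun i _ => lt_of_le_of_lt (hmax i (Finset.mem_univ i)) hneg
        have := Finset.sum_lt_sum_of_nonempty (⟨0, Finset.mem_univ 0⟩ :
          (Finset.univ : Finset (Fin (ℓ+1))).Nonempty) hall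
        rw [hsum0, Finset.sum_const_zero] at this
        exact lt_irrefl _ this
      have hlamj : lam = (ℓ:ℝ)/2 := by
        have hfac : (lam - (ℓ:ℝ)/2) * (lam + (ℓ:ℝ)/2 + 1) = 0 := by
          rw [hCr] at hlam_eq
          linear_combination -hlam_eq
        rcases mul_eq_zero.mp hfac with h' | h'
        · linarith
        · linarith
      -- expectation values in the top eigenvector
      have hermE : ∀ (X : Matrix (Fin (ℓ+1)) (Fin (ℓ+1)) ℂ), X.IsHermitian →
          star (dotProduct (star ψ) (X *ᵥ ψ)) = dotProduct (star ψ) (X *ᵥ ψ) := by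
        intro X hX
        have h1 : star (dotProduct (star ψ) (X *ᵥ ψ))
            = dotProduct (star (X *ᵥ ψ)) ψ := by
          simp only [dotProduct, star_sum, star_mul', star_star, Pi.star_apply]
          exact Finset.sum_congr rfl fun i _ => by ring
        rw [h1, Matrix.star_mulVec, ← dotProduct_mulVec, hX.eq]
      set Ea := dotProduct (star ψ) (Ma *ᵥ ψ) with hEadef
      set Eb := dotProduct (star ψ) (Mb *ᵥ ψ) with hEbdef
      have hEplus : Ea + Complex.I * Eb = 0 := by
        have : dotProduct (star ψ) (A *ᵥ ψ) = 0 := by rw [hAψ, dotProduct_zero]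
        rw [hAdef, Matrix.add_mulVec, Matrix.smul_mulVec, dotProduct_add,
          dotProduct_smul, smul_eq_mul] at this
        exact this
      have hEminus : Ea - Complex.I * Eb = 0 := by
        have := congrArg star hEplus
        rw [star_add, star_mul', hermE Ma (Mdot_herm herm a), hermE Mb (Mdot_herm herm b),
          star_zero, Complex.star_def, Complex.conj_I] at this
        linear_combination this
      have hEa : Ea = 0 := by linear_combination (hEplus + hEminus) / 2
      have hEb : Eb = 0 := by
        have h2I : (2 * Complex.I) * Eb = 0 := by linear_combination hEplus - hEminus
        rcases mul_eq_zero.mp h2I with h' | h'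
        · exact absurd h' (by simp [Complex.I_ne_zero])
        · exact h'
      have hEn : dotProduct (star ψ) (Mn *ᵥ ψ) = ((lam:ℝ):ℂ) := by
        rw [hψeig, dotProduct_smul, smul_eq_mul, hψnorm, mul_one]
      have hEk : ∀ k, dotProduct (star ψ) (L k *ᵥ ψ) = ((n k * ((ℓ:ℝ)/2) : ℝ):ℂ) := by
        intro k
        have hexpand : (a k : ℂ) • Ma + (b k : ℂ) • Mb + (n k : ℂ) • Mn = L k := by
          fin_cases k
          · exact Mdot_expand 0 (by simp; linear_combination e00)
              (by simp; linear_combination e01) (by simp; linear_combination e02)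
          · exact Mdot_expand 1 (by simp; linear_combination e01)
              (by simp; linear_combination e11) (by simp; linear_combination e12)
          · exact Mdot_expand 2 (by simp; linear_combination e02)
              (by simp; linear_combination e12) (by simp; linear_combination e22)
        rw [← hexpand, Matrix.add_mulVec, Matrix.add_mulVec, Matrix.smul_mulVec,
          Matrix.smul_mulVec, Matrix.smul_mulVec, dotProduct_add,
          dotProduct_add, dotProduct_smul, dotProduct_smul,
          dotProduct_smul, ← hEadef, ← hEbdef, hEa, hEb, hEn, hlamj]
        simp only [smul_eq_mul, smul_zero, mul_zero]
        push_cast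
        ring
      -- build the density matrix
      set P : Matrix (Fin (ℓ+1)) (Fin (ℓ+1)) ℂ := Matrix.replicateCol Unit ψ * (Matrix.replicateCol Unit ψ)ᴴ
        with hPdef
      have hPpsd : P.PosSemidef := Matrix.posSemidef_self_mul_conjTranspose _
      have htrP : P.trace = 1 := by
        rw [hPdef, Matrix.trace]
        rw [← hψnorm]
        simp only [Matrix.diag_apply, Matrix.mul_apply, Matrix.conjTranspose_apply,
          Matrix.replicateCol_apply, dotProduct, Pi.star_apply]
        refine Finset.sum_congr rfl fun i _ => ?_
        rw [Fintype.sum_unique]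
        ring
      have htrXP : ∀ X : Matrix (Fin (ℓ+1)) (Fin (ℓ+1)) ℂ,
          (X * P).trace = dotProduct (star ψ) (X *ᵥ ψ) := by
        intro X
        have hPe : ∀ i j', P i j' = ψ i * star (ψ j') := by
          intro i j'
          simp [hPdef, Matrix.mul_apply, Matrix.conjTranspose_apply, Matrix.replicateCol_apply]
        simp only [Matrix.trace, Matrix.diag, Matrix.mul_apply, hPe, dotProduct,
          Matrix.mulVec, Pi.star_apply, Finset.mul_sum]
        refine Finset.sum_congr rfl fun i _ => Finset.sum_congr rfl fun m _ => by ring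
      set t : ℝ := s / ((ℓ:ℝ)/2) with htdef
      have ht0 : 0 ≤ t := by positivity
      have ht1 : t ≤ 1 := by
        rw [htdef, div_le_one hjpos]
        exact hsj
      set u : ℝ := (1 - t) / ((ℓ:ℝ) + 1) with hudef
      have hu0 : 0 ≤ u := by
        apply div_nonneg (by linarith) (by positivity)
      refine ⟨(t:ℂ) • P + (u:ℂ) • 1, (psd_smul hPpsd ht0).add (psd_smul .one hu0), ?_, ?_⟩
      · rw [trace_add, trace_smul, trace_smul, htrP, trace_one, Fintype.card_fin,
          smul_eq_mul, smul_eq_mul]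
        have : t * 1 + u * ((ℓ:ℝ) + 1) = 1 := by
          rw [hudef]
          field_simp
          ring
        have := congrArg Complex.ofReal this
        push_cast at this ⊢
        convert this using 2
      · intro k
        rw [mul_add, mul_smul_comm, mul_smul_comm, mul_one, trace_add, trace_smul, trace_smul,
          htrXP (L k), hEk k]
        have hk : (L k).trace = 0 := by
          fin_cases k
          · exact trL0
          · exact trL1
          · exact trL2
        rw [hk, smul_zero, add_zero, smul_eq_mul]
        have hlne : (ℓ:ℝ) ≠ 0 := by intro h; rw [h] at hjpos; norm_num at hjpos
        have hreal : t * (n k * ((ℓ:ℝ)/2)) = v k := by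
          rw [htdef, hndef]
          field_simp
        exact_mod_cast congrArg Complex.ofReal hreal
end

section
/- Let L_1, L_2, L_3 ∈ ℝ with ∑_k L_k² ≤ j². The operator ρ_fix = 𝟙/(2j+1) + ∑_k a_k L_k^{(j)} with a_k = L_k / tr((L_k^{(j)})²) is positive semidefinite if and only if ∑_k L_k² ≤ (j+1)²/9. (In particular, for spins j ≥ 1 the naive linear reconstruction can fail to be positive even when the moments are quantum mechanical.) -/
open Matrix
open scoped ComplexOrder

lemma quad_bound {N : ℕ} {A B : Matrix (Fin N) (Fin N) ℂ}
    {c : ℝ} (hT : Bᴴ * B = (c:ℂ) • 1 - A*A - A)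
    {μ : ℝ} {w : Fin N → ℂ} (hw : w ≠ 0) (heig : A *ᵥ w = (μ:ℂ) • w) :
    μ^2 + μ ≤ c := by
  have h1 : 0 ≤ star w ⬝ᵥ ((Bᴴ*B) *ᵥ w) := (posSemidef_conjTranspose_mul_self B).dotProduct_mulVec_nonneg w
  rw [hT] at h1
  have hvec : ((c:ℂ) • 1 - A*A - A) *ᵥ w = ((c - μ^2 - μ : ℝ):ℂ) • w := by
    rw [sub_mulVec, sub_mulVec, ← mulVec_mulVec, heig, mulVec_smul, heig, smul_mulVec,
      one_mulVec]
    push_cast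
    module
  rw [hvec, dotProduct_smul] at h1
  have hp : 0 < star w ⬝ᵥ w := dotProduct_star_self_pos_iff.mpr hw
  rw [Complex.lt_def] at hp
  rw [Complex.le_def] at h1
  simp only [Complex.zero_re, Complex.zero_im, smul_eq_mul, Complex.mul_re, Complex.mul_im,
    Complex.ofReal_re, Complex.ofReal_im] at h1 hp
  nlinarith [h1.1, hp.1, hp.2]

lemma quad_bound' {N : ℕ} {A B : Matrix (Fin N) (Fin N) ℂ}
    {c : ℝ} (hT' : B * Bᴴ = (c:ℂ) • 1 - A*A + A)
    {μ : ℝ} {w : Fin N → ℂ} (hw : w ≠ 0) (heig : A *ᵥ w = (μ:ℂ) • w) :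
    μ^2 - μ ≤ c := by
  have h : (Bᴴ)ᴴ * Bᴴ = (c:ℂ) • 1 - (-A)*(-A) - (-A) := by
    rw [conjTranspose_conjTranspose, hT', neg_mul_neg, sub_neg_eq_add]
  have heig' : (-A) *ᵥ w = ((-μ:ℝ):ℂ) • w := by
    rw [neg_mulVec, heig]; push_cast; module
  have := quad_bound h hw heig'
  nlinarith

lemma bottom_eigenvector {N : ℕ} (hN : 0 < N) {A B : Matrix (Fin N) (Fin N) ℂ}
    (hA : A.IsHermitian) {j : ℝ} (hj : 0 ≤ j)
    (hT : Bᴴ * B = ((j*(j+1):ℝ):ℂ) • 1 - A*A - A)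
    (hT' : B * Bᴴ = ((j*(j+1):ℝ):ℂ) • 1 - A*A + A)
    (hlad : A*B - B*A = B) :
    (∃ w : Fin N → ℂ, w ≠ 0 ∧ A *ᵥ w = ((-j:ℝ):ℂ) • w) ∧
      ∀ (μ : ℝ) (w : Fin N → ℂ), w ≠ 0 → A *ᵥ w = (μ:ℂ) • w → -j ≤ μ ∧ μ ≤ j := by
  classical
  have bound : ∀ (μ : ℝ) (w : Fin N → ℂ), w ≠ 0 → A *ᵥ w = (μ:ℂ) • w → -j ≤ μ ∧ μ ≤ j := by
    intro μ w hw heig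
    have h1 := quad_bound hT hw heig
    have h2 := quad_bound' hT' hw heig
    constructor <;> nlinarith
  refine ⟨?_, bound⟩
  -- starting eigenvector
  set i0 : Fin N := ⟨0, hN⟩
  set μ₀ : ℝ := hA.eigenvalues i0 with hμ₀
  set w₀ : Fin N → ℂ := ⇑(hA.eigenvectorBasis i0) with hw₀def
  have hw₀ : w₀ ≠ 0 := by rw [hw₀def]; simpa using hA.eigenvectorBasis.orthonormal.ne_zero i0
  have heig₀ : A *ᵥ w₀ = (μ₀:ℂ) • w₀ := by
    have := hA.mulVec_eigenvectorBasis i0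
    rw [this]; funext x
    simp only [Pi.smul_apply, Complex.real_smul, smul_eq_mul]
    rfl
  -- ladder conjTranspose
  have hlad' : A * Bᴴ = Bᴴ * A - Bᴴ := by
    have := congrArg conjTranspose hlad
    rw [conjTranspose_sub, conjTranspose_mul, conjTranspose_mul, hA.eq] at this
    linear_combination (norm := noncomm_ring) -this
  set u : ℕ → (Fin N → ℂ) := fun k => (Bᴴ ^ k) *ᵥ w₀ with hu
  have hu0 : u 0 = w₀ := by simp [hu]
  have husucc : ∀ k, u (k+1) = Bᴴ *ᵥ u k := by
    intro k; simp only [hu, pow_succ', ← mulVec_mulVec]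
  have heig : ∀ k, A *ᵥ u k = ((μ₀ - k : ℝ):ℂ) • u k := by
    intro k
    induction k with
    | zero => simpa [hu0] using heig₀
    | succ k ih =>
      rw [husucc k, mulVec_mulVec, hlad', sub_mulVec, ← mulVec_mulVec, ih, mulVec_smul,
        ← husucc k]
      push_cast
      module
  have hzero : ∃ k, u k = 0 := by
    refine ⟨Nat.ceil (μ₀ + j) + 1, ?_⟩
    by_contra hne
    have := (bound _ _ hne (heig _)).1
    have hle : μ₀ + j ≤ Nat.ceil (μ₀ + j) := Nat.le_ceil _
    push_cast at this
    linarith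
  set k0 := Nat.find hzero with hk0
  have hk0spec : u k0 = 0 := Nat.find_spec hzero
  have hk0pos : k0 ≠ 0 := by
    intro h
    rw [h, hu0] at hk0spec
    exact hw₀ hk0spec
  obtain ⟨m, hm⟩ : ∃ m, k0 = m + 1 := ⟨k0 - 1, (Nat.succ_pred_eq_of_pos (Nat.pos_of_ne_zero hk0pos)).symm⟩
  have hwm : u m ≠ 0 := Nat.find_min hzero (by omega)
  have hBw : Bᴴ *ᵥ u m = 0 := by rw [← husucc, ← hm]; exact hk0spec
  set μ' : ℝ := μ₀ - m with hμ'
  have heigm : A *ᵥ u m = (μ':ℂ) • u m := heig m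
  -- B Bᴴ (u m) = 0
  have hBBw : (B * Bᴴ) *ᵥ u m = 0 := by
    rw [← mulVec_mulVec, hBw, mulVec_zero]
  rw [hT'] at hBBw
  have hvec : (((j*(j+1):ℝ):ℂ) • 1 - A*A + A) *ᵥ u m
      = ((j*(j+1) - μ'^2 + μ' : ℝ):ℂ) • u m := by
    rw [add_mulVec, sub_mulVec, ← mulVec_mulVec, heigm, mulVec_smul, heigm, smul_mulVec,
      one_mulVec]
    push_cast
    module
  rw [hvec, smul_eq_zero] at hBBw
  rcases hBBw with h | h
  · have hsc : j*(j+1) - μ'^2 + μ' = 0 := by exact_mod_cast h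
    have hle : μ' ≤ j := (bound _ _ hwm heigm).2
    have : μ' = -j := by nlinarith
    exact ⟨u m, hwm, by rw [← this]; exact heigm⟩
  · exact absurd h hwm

lemma assemble {N : ℕ} (L : Fin 3 → Matrix (Fin N) (Fin N) ℂ)
    (herm : ∀ k, (L k).IsHermitian)
    (c01 : L 0 * L 1 - L 1 * L 0 = Complex.I • L 2)
    (c12 : L 1 * L 2 - L 2 * L 1 = Complex.I • L 0)
    (c20 : L 2 * L 0 - L 0 * L 2 = Complex.I • L 1)
    (cas : ℝ)
    (hcas : L 0 * L 0 + L 1 * L 1 + L 2 * L 2 = (cas : ℂ) • 1)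
    (n : Fin 3 → ℝ) (hn : n 0^2 + n 1^2 + n 2^2 = 1) :
    ∃ B : Matrix (Fin N) (Fin N) ℂ,
      Bᴴ * B = (cas : ℂ) • 1
          - (((n 0 : ℝ) : ℂ) • L 0 + ((n 1 : ℝ) : ℂ) • L 1 + ((n 2 : ℝ) : ℂ) • L 2)
            * (((n 0 : ℝ) : ℂ) • L 0 + ((n 1 : ℝ) : ℂ) • L 1 + ((n 2 : ℝ) : ℂ) • L 2)
          - (((n 0 : ℝ) : ℂ) • L 0 + ((n 1 : ℝ) : ℂ) • L 1 + ((n 2 : ℝ) : ℂ) • L 2) ∧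
      B * Bᴴ = (cas : ℂ) • 1
          - (((n 0 : ℝ) : ℂ) • L 0 + ((n 1 : ℝ) : ℂ) • L 1 + ((n 2 : ℝ) : ℂ) • L 2)
            * (((n 0 : ℝ) : ℂ) • L 0 + ((n 1 : ℝ) : ℂ) • L 1 + ((n 2 : ℝ) : ℂ) • L 2)
          + (((n 0 : ℝ) : ℂ) • L 0 + ((n 1 : ℝ) : ℂ) • L 1 + ((n 2 : ℝ) : ℂ) • L 2) ∧
      (((n 0 : ℝ) : ℂ) • L 0 + ((n 1 : ℝ) : ℂ) • L 1 + ((n 2 : ℝ) : ℂ) • L 2) * B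
        - B * (((n 0 : ℝ) : ℂ) • L 0 + ((n 1 : ℝ) : ℂ) • L 1 + ((n 2 : ℝ) : ℂ) • L 2) = B := by
  have hI2 : Complex.I^2 = -1 := Complex.I_sq
  set c0 : ℂ := ((n 0 : ℝ) : ℂ) with hc0
  set c1 : ℂ := ((n 1 : ℝ) : ℂ) with hc1
  set c2 : ℂ := ((n 2 : ℝ) : ℂ) with hc2
  set cc : ℂ := (cas : ℂ) with hccdef
  have hnC : c0^2 + c1^2 + c2^2 = 1 := by
    rw [hc0, hc1, hc2]; exact_mod_cast hn
  have hst0 : star c0 = c0 := by rw [hc0]; exact Complex.conj_ofReal _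
  have hst1 : star c1 = c1 := by rw [hc1]; exact Complex.conj_ofReal _
  have hst2 : star c2 = c2 := by rw [hc2]; exact Complex.conj_ofReal _
  have hc10 : L 1 * L 0 = L 0 * L 1 - Complex.I • L 2 := by
    linear_combination (norm := module) -c01
  have hc21 : L 2 * L 1 = L 1 * L 2 - Complex.I • L 0 := by
    linear_combination (norm := module) -c12
  have hc02 : L 0 * L 2 = L 2 * L 0 - Complex.I • L 1 := by
    linear_combination (norm := module) -c20
  have hQ22 : L 2 * L 2 = cc • 1 - L 0 * L 0 - L 1 * L 1 := by
    linear_combination (norm := module) hcas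
  have hns : n 0 ^ 2 ≠ 1 ∨ n 1 ^ 2 ≠ 1 := by
    by_contra hcon
    push_neg at hcon
    nlinarith [sq_nonneg (n 2), hcon.1, hcon.2]
  rcases hns with hp | hp
  · -- case p = 0
    have hle : n 0 ^ 2 ≤ 1 := by nlinarith [sq_nonneg (n 1), sq_nonneg (n 2)]
    have hd : 0 < 1 - n 0 ^ 2 := by
      rcases lt_of_le_of_ne hle hp with h
      linarith
    set s : ℝ := Real.sqrt (1 - n 0 ^ 2) with hsdef
    have hs : (s : ℂ) * (s : ℂ) = 1 - c0 * c0 := by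
      rw [← Complex.ofReal_mul, Real.mul_self_sqrt hd.le, hc0]
      push_cast
      ring
    have hsne : (s : ℂ) ≠ 0 := by
      simp only [ne_eq, Complex.ofReal_eq_zero]
      exact (Real.sqrt_pos.mpr hd).ne'
    set X : Matrix (Fin N) (Fin N) ℂ := (1 - c0*c0) • L 0 + (-(c0*c1) + c2*Complex.I) • L 1 + (-(c0*c2) - c1*Complex.I) • L 2 with hX
    set Y : Matrix (Fin N) (Fin N) ℂ := (1 - c0*c0) • L 0 + (-(c0*c1) - c2*Complex.I) • L 1 + (-(c0*c2) + c1*Complex.I) • L 2 with hY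
    have hXdag : Xᴴ = Y := by
      rw [hX, hY]
      simp only [conjTranspose_add, conjTranspose_smul, (herm 0).eq, (herm 1).eq, (herm 2).eq,
        star_sub, star_add, star_neg, star_mul', star_one, hst0, hst1, hst2, Complex.star_def,
        Complex.conj_I]
      module
    have key1 : Y * X = (1 - c0*c0) • (cc • (1 : Matrix (Fin N) (Fin N) ℂ)
        - (c0 • L 0 + c1 • L 1 + c2 • L 2) * (c0 • L 0 + c1 • L 1 + c2 • L 2)
        - (c0 • L 0 + c1 • L 1 + c2 • L 2)) := by
      rw [hX, hY]
      simp only [mul_add, add_mul, sub_mul, mul_sub, smul_mul_assoc, mul_smul_comm, smul_smul,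
        smul_add, smul_sub]
      simp only [hc10, hc21, hc02, hQ22]
      linear_combination (norm := module) ((-1*c1^2*cc) * hI2) • (1 : Matrix (Fin N) (Fin N) ℂ) + ((cc) * hnC) • (1 : Matrix (Fin N) (Fin N) ℂ) + ((-1*c1*c2*Complex.I + c0*c2^2 + c0*c1^2) * hI2) • L 0 + ((-1*c0) * hnC) • L 0 + ((c1 + -1*c0^2*c1) * hI2) • L 1 + ((c2 + -1*c0^2*c2) * hI2) • L 2 + ((2*c1*c2) * hI2) • (L 1 * L 2) + ((c1^2) * hI2) • (L 0 * L 0) + ((-1) * hnC) • (L 0 * L 0) + ((-1*c2^2 + c1^2) * hI2) • (L 1 * L 1)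
    have key2 : X * Y = (1 - c0*c0) • (cc • (1 : Matrix (Fin N) (Fin N) ℂ)
        - (c0 • L 0 + c1 • L 1 + c2 • L 2) * (c0 • L 0 + c1 • L 1 + c2 • L 2)
        + (c0 • L 0 + c1 • L 1 + c2 • L 2)) := by
      rw [hX, hY]
      simp only [mul_add, add_mul, sub_mul, mul_sub, smul_mul_assoc, mul_smul_comm, smul_smul,
        smul_add, smul_sub]
      simp only [hc10, hc21, hc02, hQ22]
      linear_combination (norm := module) ((-1*c1^2*cc) * hI2) • (1 : Matrix (Fin N) (Fin N) ℂ) + ((cc) * hnC) • (1 : Matrix (Fin N) (Fin N) ℂ) + ((-1*c1*c2*Complex.I + -1*c0*c2^2 + -1*c0*c1^2) * hI2) • L 0 + ((c0) * hnC) • L 0 + ((-1*c1 + c0^2*c1) * hI2) • L 1 + ((-1*c2 + c0^2*c2) * hI2) • L 2 + ((2*c1*c2) * hI2) • (L 1 * L 2) + ((c1^2) * hI2) • (L 0 * L 0) + ((-1) * hnC) • (L 0 * L 0) + ((-1*c2^2 + c1^2) * hI2) • (L 1 * L 1)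
    have key3 : (c0 • L 0 + c1 • L 1 + c2 • L 2) * X - X * (c0 • L 0 + c1 • L 1 + c2 • L 2)
        = X := by
      rw [hX]
      simp only [mul_add, add_mul, sub_mul, mul_sub, smul_mul_assoc, mul_smul_comm, smul_smul,
        smul_add, smul_sub]
      simp only [hc10, hc21, hc02, hQ22]
      linear_combination (norm := module) ((-1*c2^2 + -1*c1^2) * hI2) • L 0 + ((1) * hnC) • L 0 + ((c0*c1) * hI2) • L 1 + ((c0*c2) * hI2) • L 2
    have hcoef : ((s : ℂ))⁻¹ * ((s : ℂ))⁻¹ * (1 - c0*c0) = 1 := by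
      rw [← hs]
      field_simp
    refine ⟨(s : ℂ)⁻¹ • X, ?_, ?_, ?_⟩
    · rw [conjTranspose_smul, hXdag, star_inv₀, Complex.star_def, Complex.conj_ofReal,
        smul_mul_assoc, mul_smul_comm, smul_smul, key1, smul_smul, hcoef, one_smul]
    · rw [conjTranspose_smul, hXdag, star_inv₀, Complex.star_def, Complex.conj_ofReal,
        mul_smul_comm, smul_mul_assoc, smul_smul, key2, smul_smul, hcoef, one_smul]
    · rw [mul_smul_comm, smul_mul_assoc, ← smul_sub, key3]
  · -- case p = 1
    have hle : n 1 ^ 2 ≤ 1 := by nlinarith [sq_nonneg (n 2), sq_nonneg (n 0)]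
    have hd : 0 < 1 - n 1 ^ 2 := by
      rcases lt_of_le_of_ne hle hp with h
      linarith
    set s : ℝ := Real.sqrt (1 - n 1 ^ 2) with hsdef
    have hs : (s : ℂ) * (s : ℂ) = 1 - c1 * c1 := by
      rw [← Complex.ofReal_mul, Real.mul_self_sqrt hd.le, hc1]
      push_cast
      ring
    have hsne : (s : ℂ) ≠ 0 := by
      simp only [ne_eq, Complex.ofReal_eq_zero]
      exact (Real.sqrt_pos.mpr hd).ne'
    set X : Matrix (Fin N) (Fin N) ℂ := (-(c0*c1) - c2*Complex.I) • L 0 + (1 - c1*c1) • L 1 + (-(c1*c2) + c0*Complex.I) • L 2 with hX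
    set Y : Matrix (Fin N) (Fin N) ℂ := (-(c0*c1) + c2*Complex.I) • L 0 + (1 - c1*c1) • L 1 + (-(c1*c2) - c0*Complex.I) • L 2 with hY
    have hXdag : Xᴴ = Y := by
      rw [hX, hY]
      simp only [conjTranspose_add, conjTranspose_smul, (herm 0).eq, (herm 1).eq, (herm 2).eq,
        star_sub, star_add, star_neg, star_mul', star_one, hst0, hst1, hst2, Complex.star_def,
        Complex.conj_I]
      module
    have key1 : Y * X = (1 - c1*c1) • (cc • (1 : Matrix (Fin N) (Fin N) ℂ)
        - (c0 • L 0 + c1 • L 1 + c2 • L 2) * (c0 • L 0 + c1 • L 1 + c2 • L 2)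
        - (c0 • L 0 + c1 • L 1 + c2 • L 2)) := by
      rw [hX, hY]
      simp only [mul_add, add_mul, sub_mul, mul_sub, smul_mul_assoc, mul_smul_comm, smul_smul,
        smul_add, smul_sub]
      simp only [hc10, hc21, hc02, hQ22]
      linear_combination (norm := module) ((-1*c0^2*cc) * hI2) • (1 : Matrix (Fin N) (Fin N) ℂ) + ((cc) * hnC) • (1 : Matrix (Fin N) (Fin N) ℂ) + ((c0 + -1*c0*c1^2) * hI2) • L 0 + ((c1*c2^2 + -1*c0*c2*Complex.I + c0^2*c1) * hI2) • L 1 + ((-1*c1) * hnC) • L 1 + ((c2 + -1*c1^2*c2) * hI2) • L 2 + ((2*c0*c2) * hI2) • (L 2 * L 0) + ((-1*c2^2 + c0^2) * hI2) • (L 0 * L 0) + ((c0^2) * hI2) • (L 1 * L 1) + ((-1) * hnC) • (L 1 * L 1)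
    have key2 : X * Y = (1 - c1*c1) • (cc • (1 : Matrix (Fin N) (Fin N) ℂ)
        - (c0 • L 0 + c1 • L 1 + c2 • L 2) * (c0 • L 0 + c1 • L 1 + c2 • L 2)
        + (c0 • L 0 + c1 • L 1 + c2 • L 2)) := by
      rw [hX, hY]
      simp only [mul_add, add_mul, sub_mul, mul_sub, smul_mul_assoc, mul_smul_comm, smul_smul,
        smul_add, smul_sub]
      simp only [hc10, hc21, hc02, hQ22]
      linear_combination (norm := module) ((-1*c0^2*cc) * hI2) • (1 : Matrix (Fin N) (Fin N) ℂ) + ((cc) * hnC) • (1 : Matrix (Fin N) (Fin N) ℂ) + ((-1*c0 + c0*c1^2) * hI2) • L 0 + ((-1*c1*c2^2 + -1*c0*c2*Complex.I + -1*c0^2*c1) * hI2) • L 1 + ((c1) * hnC) • L 1 + ((-1*c2 + c1^2*c2) * hI2) • L 2 + ((2*c0*c2) * hI2) • (L 2 * L 0) + ((-1*c2^2 + c0^2) * hI2) • (L 0 * L 0) + ((c0^2) * hI2) • (L 1 * L 1) + ((-1) * hnC) • (L 1 * L 1)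
    have key3 : (c0 • L 0 + c1 • L 1 + c2 • L 2) * X - X * (c0 • L 0 + c1 • L 1 + c2 • L 2)
        = X := by
      rw [hX]
      simp only [mul_add, add_mul, sub_mul, mul_sub, smul_mul_assoc, mul_smul_comm, smul_smul,
        smul_add, smul_sub]
      simp only [hc10, hc21, hc02, hQ22]
      linear_combination (norm := module) ((c0*c1) * hI2) • L 0 + ((-1*c2^2 + -1*c0^2) * hI2) • L 1 + ((1) * hnC) • L 1 + ((c1*c2) * hI2) • L 2
    have hcoef : ((s : ℂ))⁻¹ * ((s : ℂ))⁻¹ * (1 - c1*c1) = 1 := by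
      rw [← hs]
      field_simp
    refine ⟨(s : ℂ)⁻¹ • X, ?_, ?_, ?_⟩
    · rw [conjTranspose_smul, hXdag, star_inv₀, Complex.star_def, Complex.conj_ofReal,
        smul_mul_assoc, mul_smul_comm, smul_smul, key1, smul_smul, hcoef, one_smul]
    · rw [conjTranspose_smul, hXdag, star_inv₀, Complex.star_def, Complex.conj_ofReal,
        mul_smul_comm, smul_mul_assoc, smul_smul, key2, smul_smul, hcoef, one_smul]
    · rw [mul_smul_comm, smul_mul_assoc, ← smul_sub, key3]

lemma real_smul_eqC {N : ℕ} (x : ℝ) (w : Fin N → ℂ) : x • w = ((x : ℝ) : ℂ) • w := by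
  funext i
  simp [Pi.smul_apply, Complex.real_smul]

lemma nonneg_of_dot {N : ℕ} {w : Fin N → ℂ} (hw : w ≠ 0) {x : ℝ}
    (h : 0 ≤ ((x : ℝ) : ℂ) * (star w ⬝ᵥ w)) : 0 ≤ x := by
  have hp : 0 < star w ⬝ᵥ w := dotProduct_star_self_pos_iff.mpr hw
  rw [Complex.lt_def] at hp
  rw [Complex.le_def] at h
  simp only [Complex.zero_re, Complex.zero_im, Complex.mul_re, Complex.ofReal_re,
    Complex.ofReal_im] at h hp
  nlinarith [h.1, hp.1, hp.2]

lemma psd_combo_rev {N : ℕ} {A : Matrix (Fin N) (Fin N) ℂ} {a c lo : ℝ}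
    {w : Fin N → ℂ} (hw : w ≠ 0) (heig : A *ᵥ w = ((lo : ℝ) : ℂ) • w)
    (hPSD : (((a : ℝ) : ℂ) • (1 : Matrix (Fin N) (Fin N) ℂ) + ((c : ℝ) : ℂ) • A).PosSemidef) :
    0 ≤ a + c * lo := by
  have h2 := hPSD.dotProduct_mulVec_nonneg w
  have hmv : (((a : ℝ) : ℂ) • (1 : Matrix (Fin N) (Fin N) ℂ) + ((c : ℝ) : ℂ) • A) *ᵥ w
      = ((a + c * lo : ℝ) : ℂ) • w := by
    rw [add_mulVec, smul_mulVec, one_mulVec, smul_mulVec, heig]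
    push_cast
    module
  rw [hmv, dotProduct_smul, smul_eq_mul] at h2
  exact nonneg_of_dot hw h2

lemma psd_combo {N : ℕ} {A : Matrix (Fin N) (Fin N) ℂ} {a c lo : ℝ}
    (hc : 0 < c) (hlo : 0 ≤ a + c * lo)
    (hbound : ∀ (μ : ℝ) (w : Fin N → ℂ), w ≠ 0 → A *ᵥ w = ((μ : ℝ) : ℂ) • w → lo ≤ μ)
    (hHerm : (((a : ℝ) : ℂ) • (1 : Matrix (Fin N) (Fin N) ℂ) + ((c : ℝ) : ℂ) • A).IsHermitian) :
    (((a : ℝ) : ℂ) • (1 : Matrix (Fin N) (Fin N) ℂ) + ((c : ℝ) : ℂ) • A).PosSemidef := by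
  refine hHerm.posSemidef_iff_eigenvalues_nonneg.mpr (Pi.le_def.mpr ?_)
  intro i
  set μ : ℝ := hHerm.eigenvalues i with hμdef
  set w : Fin N → ℂ := ⇑(hHerm.eigenvectorBasis i) with hwdef
  have hwne : w ≠ 0 := by rw [hwdef]; simpa using hHerm.eigenvectorBasis.orthonormal.ne_zero i
  have hρw : (((a : ℝ) : ℂ) • (1 : Matrix (Fin N) (Fin N) ℂ) + ((c : ℝ) : ℂ) • A) *ᵥ w
      = ((μ : ℝ) : ℂ) • w := by
    rw [hHerm.mulVec_eigenvectorBasis i, real_smul_eqC]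
  rw [add_mulVec, smul_mulVec, one_mulVec, smul_mulVec] at hρw
  have hcC : ((c : ℝ) : ℂ) ≠ 0 := by
    simp only [ne_eq, Complex.ofReal_eq_zero]
    exact hc.ne'
  have hAw : A *ᵥ w = (((μ - a) / c : ℝ) : ℂ) • w := by
    apply smul_right_injective _ hcC
    show ((c : ℝ) : ℂ) • (A *ᵥ w) = ((c : ℝ) : ℂ) • ((((μ - a) / c : ℝ) : ℂ) • w)
    rw [smul_smul, ← Complex.ofReal_mul]
    have he : c * ((μ - a) / c) = μ - a := by
      field_simp
    rw [he]
    linear_combination (norm := module) hρw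
  have hbd := hbound _ _ hwne hAw
  have : lo * c ≤ (μ - a) / c * c := mul_le_mul_of_nonneg_right hbd hc.le
  rw [div_mul_cancel₀ _ hc.ne'] at this
  nlinarith [hlo, this, show (0 : Fin N → ℝ) i = 0 from rfl]

set_option maxHeartbeats 2000000 in
/-- Let `L₁,L₂,L₃ ∈ ℝ` with `∑ L_k² ≤ j²` (here `j = ℓ/2`, dimension `d = ℓ+1 = 2j+1`).
The fixed-part operator `ρ_fix = 𝟙/(2j+1) + ∑_k a_k L_k^{(j)}` with
`a_k = L_k / tr((L_k^{(j)})²)` and `tr((L_k^{(j)})²) = j(j+1)(2j+1)/3` is positive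
semidefinite if and only if `∑ L_k² ≤ (j+1)²/9`. -/
theorem rho_fix_posSemidef_iff (ℓ : ℕ) (L : Fin 3 → Matrix (Fin (ℓ + 1)) (Fin (ℓ + 1)) ℂ)
    (herm : ∀ k, (L k).IsHermitian)
    (comm : ∀ k l, L k * L l - L l * L k =
      Complex.I • ∑ m, (leviCivita k l m : ℂ) • L m)
    (casimir : ∑ k, L k * L k
      = ((((ℓ : ℝ) / 2) * ((ℓ : ℝ) / 2 + 1) : ℝ) : ℂ) • (1 : Matrix (Fin (ℓ + 1)) (Fin (ℓ + 1)) ℂ))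
    (irred : ∀ X : Matrix (Fin (ℓ + 1)) (Fin (ℓ + 1)) ℂ,
      (∀ k, X * L k = L k * X) → ∃ c : ℂ, X = c • (1 : Matrix (Fin (ℓ + 1)) (Fin (ℓ + 1)) ℂ))
    (htr2 : ∀ k, (L k * L k).trace
      = ((((ℓ : ℝ) / 2) * ((ℓ : ℝ) / 2 + 1) * ((ℓ : ℝ) + 1) / 3 : ℝ) : ℂ))
    (v : Fin 3 → ℝ) (hv : ∑ k, (v k) ^ 2 ≤ ((ℓ : ℝ) / 2) ^ 2) :
    ((((ℓ : ℝ) + 1 : ℝ) : ℂ)⁻¹ • (1 : Matrix (Fin (ℓ + 1)) (Fin (ℓ + 1)) ℂ)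
        + ∑ k, ((v k / (((ℓ : ℝ) / 2) * ((ℓ : ℝ) / 2 + 1) * ((ℓ : ℝ) + 1) / 3) : ℝ) : ℂ) • L k).PosSemidef
      ↔ ∑ k, (v k) ^ 2 ≤ ((ℓ : ℝ) / 2 + 1) ^ 2 / 9 := by
  have hone : (0:ℝ) < (ℓ : ℝ) + 1 := by positivity
  have haC : ((((ℓ : ℝ) + 1 : ℝ)) : ℂ)⁻¹ = (((((ℓ:ℝ) + 1)⁻¹ : ℝ)) : ℂ) := by
    rw [Complex.ofReal_inv]
  by_cases h0 : ∑ k, (v k) ^ 2 = 0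
  · -- all v k = 0
    have hvk : ∀ k, v k = 0 := by
      intro k
      have h1 : ∀ i ∈ Finset.univ, (0:ℝ) ≤ v i ^ 2 := fun i _ => sq_nonneg _
      have := (Finset.sum_eq_zero_iff_of_nonneg h1).mp h0 k (Finset.mem_univ k)
      exact pow_eq_zero_iff (two_ne_zero) |>.mp this
    have hs0 : ∑ k, ((v k / (((ℓ : ℝ) / 2) * ((ℓ : ℝ) / 2 + 1) * ((ℓ : ℝ) + 1) / 3) : ℝ) : ℂ) • L k
        = 0 := by
      apply Finset.sum_eq_zero
      intro k _
      rw [hvk k]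
      norm_num
    rw [hs0, add_zero, h0]
    apply iff_of_true
    · refine posSemidef_iff_dotProduct_mulVec.mpr ⟨?_, ?_⟩
      · unfold Matrix.IsHermitian
        rw [conjTranspose_smul, conjTranspose_one, haC, Complex.star_def, Complex.conj_ofReal]
      · intro x
        rw [smul_mulVec, one_mulVec, dotProduct_smul, smul_eq_mul, haC]
        apply mul_nonneg
        · rw [Complex.zero_le_real]
          positivity
        · exact dotProduct_star_self_nonneg x
    · positivity
  · -- main case
    set j : ℝ := (ℓ : ℝ) / 2 with hjdef
    set t : ℝ := j * (j + 1) * ((ℓ : ℝ) + 1) / 3 with htdef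
    have hsq : 0 < ∑ k, (v k) ^ 2 := lt_of_le_of_ne (by positivity) (Ne.symm h0)
    set r : ℝ := Real.sqrt (∑ k, (v k) ^ 2) with hrdef
    have hr2 : r ^ 2 = ∑ k, (v k) ^ 2 := Real.sq_sqrt hsq.le
    have hrpos : 0 < r := Real.sqrt_pos.mpr hsq
    have hj0 : (0:ℝ) ≤ j := by positivity
    have hjpos : 0 < j := by nlinarith [hv, hsq]
    have htpos : 0 < t := by
      rw [htdef]
      have h1 : 0 < j * (j + 1) := mul_pos hjpos (by linarith)
      have h2 : 0 < j * (j + 1) * ((ℓ:ℝ) + 1) := mul_pos h1 hone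
      linarith
    set n : Fin 3 → ℝ := fun k => v k / r with hndef
    have hn : n 0 ^ 2 + n 1 ^ 2 + n 2 ^ 2 = 1 := by
      rw [Fin.sum_univ_three] at hr2
      simp only [hndef]
      field_simp
      linarith [hr2]
    have c01 : L 0 * L 1 - L 1 * L 0 = Complex.I • L 2 := by
      have h := comm 0 1
      rw [Fin.sum_univ_three] at h
      simp (config := { decide := true }) [leviCivita] at h
      exact h
    have c12 : L 1 * L 2 - L 2 * L 1 = Complex.I • L 0 := by
      have h := comm 1 2
      rw [Fin.sum_univ_three] at h
      simp (config := { decide := true }) [leviCivita] at h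
      exact h
    have c20 : L 2 * L 0 - L 0 * L 2 = Complex.I • L 1 := by
      have h := comm 2 0
      rw [Fin.sum_univ_three] at h
      simp (config := { decide := true }) [leviCivita] at h
      exact h
    rw [Fin.sum_univ_three] at casimir
    obtain ⟨B, hT, hT', hlad⟩ := assemble L herm c01 c12 c20 (j * (j + 1)) casimir n hn
    set A : Matrix (Fin (ℓ+1)) (Fin (ℓ+1)) ℂ :=
      ((n 0 : ℝ) : ℂ) • L 0 + ((n 1 : ℝ) : ℂ) • L 1 + ((n 2 : ℝ) : ℂ) • L 2 with hAdef
    have hAherm : A.IsHermitian := by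
      unfold Matrix.IsHermitian
      rw [hAdef]
      simp only [conjTranspose_add, conjTranspose_smul, (herm 0).eq, (herm 1).eq, (herm 2).eq,
        Complex.star_def, Complex.conj_ofReal]
    obtain ⟨⟨w, hwne, hweig⟩, bound⟩ :=
      bottom_eigenvector (Nat.succ_pos ℓ) hAherm hj0 hT hT' hlad
    -- rewrite the sum
    have hc : ∀ k : Fin 3, ((v k / t : ℝ) : ℂ) = ((r / t : ℝ) : ℂ) * ((n k : ℝ) : ℂ) := by
      intro k
      norm_cast
      simp only [hndef]
      field_simp
    have hsum : ∑ k, ((v k / t : ℝ) : ℂ) • L k = ((r / t : ℝ) : ℂ) • A := by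
      rw [Fin.sum_univ_three, hc 0, hc 1, hc 2, hAdef]
      module
    rw [hsum, haC]
    have h4 : ((ℓ:ℝ) + 1)⁻¹ * t = j * (j + 1) / 3 := by
      rw [htdef]
      field_simp
    constructor
    · intro hPSD
      have hkey := psd_combo_rev hwne hweig hPSD
      have h3 : r / t * j ≤ ((ℓ:ℝ) + 1)⁻¹ := by nlinarith [hkey]
      rw [div_mul_eq_mul_div, div_le_iff₀ htpos] at h3
      rw [h4] at h3
      have hr3 : r ≤ (j + 1) / 3 := by nlinarith [h3, hjpos]
      rw [← hr2]
      nlinarith [hrpos.le, hr3, hjpos]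
    · intro hle
      have hr3 : r ≤ (j + 1) / 3 := by nlinarith [hr2, hle, hrpos.le, hjpos]
      have hcpos : 0 < r / t := div_pos hrpos htpos
      have hlo : 0 ≤ ((ℓ:ℝ) + 1)⁻¹ + r / t * (-j) := by
        have h5 : r / t * j ≤ ((ℓ:ℝ) + 1)⁻¹ := by
          rw [div_mul_eq_mul_div, div_le_iff₀ htpos, h4]
          nlinarith [hr3, hjpos]
        linarith
      have hHerm : (((((ℓ:ℝ) + 1)⁻¹ : ℝ) : ℂ) • (1 : Matrix (Fin (ℓ+1)) (Fin (ℓ+1)) ℂ)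
          + ((r / t : ℝ) : ℂ) • A).IsHermitian := by
        unfold Matrix.IsHermitian
        rw [conjTranspose_add, conjTranspose_smul, conjTranspose_smul, conjTranspose_one,
          hAherm.eq]
        simp [Complex.conj_ofReal]
      exact psd_combo hcpos hlo (fun μ w hw he => (bound μ w hw he).1) hHerm
end

section
/- Every separable density operator ρ on ℂ²⊗ℂ² supported on the symmetric subspace admits a decomposition ρ = ∑_i p_i |α_i⟩⟨α_i| ⊗ |α_i⟩⟨α_i| into symmetric pure product states; consequently, ρ has a Bose-symmetric extension to any number N ≥ 2 of qubits, namely ω = ∑_i p_i |α_i⟩⟨α_i|^{⊗N}, a density operator supported on the symmetric subspace of (ℂ²)^{⊗N} whose partial trace over the last N−2 factors equals ρ. -/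
open Matrix
open scoped ComplexOrder Kronecker

/-- The rank-one projector `|α⟩⟨α|` of a qubit vector. -/
noncomputable def proj (α : Fin 2 → ℂ) : Matrix (Fin 2) (Fin 2) ℂ :=
  Matrix.of fun i j => α i * star (α j)

/-- The swap operator on `ℂ² ⊗ ℂ²`. -/
def swapMat : Matrix (Fin 2 × Fin 2) (Fin 2 × Fin 2) ℂ :=
  Matrix.of fun p q => if p.1 = q.2 ∧ p.2 = q.1 then 1 else 0

/-- The permutation operator `π(p)` on `(ℂ²)^{⊗N}`. -/
noncomputable def permMat (N : ℕ) (p : Equiv.Perm (Fin N)) :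
    Matrix (Fin N → Fin 2) (Fin N → Fin 2) ℂ :=
  Matrix.of fun f g => if ∀ i, f (p i) = g i then 1 else 0

/-- Partial trace over the last `n` of `n+2` qubits, producing a two-qubit operator. -/
noncomputable def ptrace2 (n : ℕ)
    (ω : Matrix (Fin (n + 2) → Fin 2) (Fin (n + 2) → Fin 2) ℂ) :
    Matrix (Fin 2 × Fin 2) (Fin 2 × Fin 2) ℂ :=
  Matrix.of fun p q => ∑ t : Fin n → Fin 2,
    ω (Fin.cons p.1 (Fin.cons p.2 t)) (Fin.cons q.1 (Fin.cons q.2 t))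

set_option maxHeartbeats 1000000

/-! ### Auxiliary lemmas -/

lemma psd_pure {ι : Type*} [Fintype ι] [DecidableEq ι] (w : ι → ℂ) :
    (Matrix.of fun f g => w f * star (w g)).PosSemidef := by
  refine Matrix.posSemidef_iff_dotProduct_mulVec.mpr ⟨?_, ?_⟩
  · ext i j; simp [Matrix.conjTranspose_apply, mul_comm]
  · intro x
    have : star x ⬝ᵥ (Matrix.of fun f g => w f * star (w g)) *ᵥ x
        = (star x ⬝ᵥ w) * star (star x ⬝ᵥ w) := by
      simp only [dotProduct, Matrix.mulVec, Matrix.of_apply, Pi.star_apply, star_sum, star_mul',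
        star_star, Finset.mul_sum, Finset.sum_mul]
      rw [Finset.sum_comm]
      apply Finset.sum_congr rfl; intro i _
      apply Finset.sum_congr rfl; intro j _
      ring
    rw [this]
    exact mul_star_self_nonneg _

lemma psd_smul_s8 {ι : Type*} [Fintype ι] {M : Matrix ι ι ℂ} (hM : M.PosSemidef) {c : ℝ}
    (hc : 0 ≤ c) : (((c : ℝ) : ℂ) • M).PosSemidef := by
  refine Matrix.posSemidef_iff_dotProduct_mulVec.mpr ⟨?_, ?_⟩
  · have h1 := hM.1
    unfold Matrix.IsHermitian at *
    rw [Matrix.conjTranspose_smul, h1, Complex.star_def, Complex.conj_ofReal]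
  · intro x
    rw [Matrix.smul_mulVec, dotProduct_smul, smul_eq_mul]
    exact mul_nonneg (Complex.zero_le_real.mpr hc) (hM.dotProduct_mulVec_nonneg x)

lemma psd_sum {ι κ : Type*} [Fintype ι] [Fintype κ] (f : κ → Matrix ι ι ℂ)
    (h : ∀ k, (f k).PosSemidef) : (∑ k, f k).PosSemidef := by
  classical
  refine Finset.sum_induction f _ (fun a b ha hb => ha.add hb) Matrix.PosSemidef.zero
    fun k _ => h k

lemma trace_diff (a b : Fin 2 → ℂ) :
    (proj a ⊗ₖ proj b).trace - (swapMat * (proj a ⊗ₖ proj b)).trace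
      = (a 0 * b 1 - a 1 * b 0) * star (a 0 * b 1 - a 1 * b 0) := by
  simp [Matrix.trace, Matrix.mul_apply, swapMat, proj, Matrix.diag, Fintype.sum_prod_type,
    Fin.sum_univ_two, star_sub, star_mul', Prod.ext_iff]
  ring

lemma proj_eq (a b : Fin 2 → ℂ) (hna : ∑ x, Complex.normSq (a x) = 1)
    (hnb : ∑ x, Complex.normSq (b x) = 1) (hD : a 0 * b 1 = a 1 * b 0) :
    proj b = proj a := by
  obtain ⟨c, hc⟩ : ∃ c, b = fun x => c * a x := by
    by_cases h0 : a 0 = 0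
    · have ha1 : a 1 ≠ 0 := by
        intro h; rw [Fin.sum_univ_two, h0, h] at hna; simp at hna
      refine ⟨b 1 / a 1, ?_⟩
      funext x
      have hb0 : b 0 = 0 := by
        have h : a 1 * b 0 = 0 := by rw [← hD, h0, zero_mul]
        rcases mul_eq_zero.mp h with h | h
        · exact absurd h ha1
        · exact h
      fin_cases x
      · simp [hb0, h0]
      · field_simp
        rfl
    · refine ⟨b 0 / a 0, ?_⟩
      funext x
      fin_cases x
      · field_simp
        rfl
      · field_simp
        show b 1 * a 0 = b 0 * a 1
        linear_combination hD
  have hc1 : Complex.normSq c = 1 := by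
    have := hnb
    simp only [hc, Complex.normSq_mul] at this
    rw [← Finset.mul_sum, hna, mul_one] at this
    exact this
  have hcc : c * star c = 1 := by
    rw [Complex.star_def, Complex.mul_conj, hc1, Complex.ofReal_one]
  ext i j
  simp only [proj, Matrix.of_apply, hc, star_mul']
  linear_combination a i * star (a j) * hcc

lemma trace_pure (v : Fin 2 → ℂ) (hv : ∑ x, Complex.normSq (v x) = 1) (N : ℕ) :
    (Matrix.of fun f g : Fin N → Fin 2 => (∏ s, v (f s)) * star (∏ s, v (g s))).trace = 1 := by
  have h1 : ∀ f : Fin N → Fin 2, (∏ s, v (f s)) * star (∏ s, v (f s))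
      = ∏ s, (v (f s) * star (v (f s))) := by
    intro f; rw [star_prod, Finset.prod_mul_distrib]
  have h2 : ∑ x, v x * star (v x) = 1 := by
    simp only [Complex.star_def, Complex.mul_conj]
    norm_cast
  calc (Matrix.of fun f g : Fin N → Fin 2 => (∏ s, v (f s)) * star (∏ s, v (g s))).trace
      = ∑ f : Fin N → Fin 2, ∏ s, (v (f s) * star (v (f s))) := by
        simp only [Matrix.trace, Matrix.diag_apply, Matrix.of_apply]
        exact Finset.sum_congr rfl fun f _ => h1 f
    _ = ∏ s : Fin N, ∑ x, (v x * star (v x)) := by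
        have := Finset.prod_univ_sum (κ := fun _ : Fin N => Fin 2)
          (fun _ => Finset.univ) (fun _ x => v x * star (v x))
        rw [Fintype.piFinset_univ] at this
        exact this.symm
    _ = 1 := by rw [h2]; exact Finset.prod_const_one

lemma perm_left (N : ℕ) (pp : Equiv.Perm (Fin N)) (v : Fin 2 → ℂ) :
    permMat N pp * (Matrix.of fun f g : Fin N → Fin 2 =>
        (∏ s, v (f s)) * star (∏ s, v (g s)))
      = Matrix.of fun f g : Fin N → Fin 2 => (∏ s, v (f s)) * star (∏ s, v (g s)) := by
  ext f g
  rw [Matrix.mul_apply]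
  have h1 : ∀ h : Fin N → Fin 2, permMat N pp f h = if (fun i => f (pp i)) = h then 1 else 0 := by
    intro h
    simp [permMat, funext_iff]
  simp only [h1]
  rw [Finset.sum_eq_single (fun i => f (pp i))]
  · rw [if_pos rfl, one_mul, Matrix.of_apply, Matrix.of_apply,
      Equiv.prod_comp pp (fun s => v (f s))]
  · intro b _ hb
    rw [if_neg (fun h => hb h.symm), zero_mul]
  · intro h; exact absurd (Finset.mem_univ _) h

lemma perm_right (N : ℕ) (pp : Equiv.Perm (Fin N)) (v : Fin 2 → ℂ) :
    (Matrix.of fun f g : Fin N → Fin 2 =>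
        (∏ s, v (f s)) * star (∏ s, v (g s))) * permMat N pp
      = Matrix.of fun f g : Fin N → Fin 2 => (∏ s, v (f s)) * star (∏ s, v (g s)) := by
  ext f g
  rw [Matrix.mul_apply]
  have h1 : ∀ h : Fin N → Fin 2, permMat N pp h g
      = if (fun j => g (pp.symm j)) = h then 1 else 0 := by
    intro h
    simp only [permMat, Matrix.of_apply]
    congr 1
    rw [eq_iff_iff]
    constructor
    · intro hh; funext j
      have := hh (pp.symm j)
      rw [Equiv.apply_symm_apply] at this
      rw [this]
    · intro hh i
      rw [← hh]
      simp
  simp only [h1]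
  rw [Finset.sum_eq_single (fun j => g (pp.symm j))]
  · rw [if_pos rfl, mul_one, Matrix.of_apply, Matrix.of_apply,
      Equiv.prod_comp pp.symm (fun s => v (g s))]
  · intro b _ hb
    rw [if_neg (fun h => hb h.symm), mul_zero]
  · intro h; exact absurd (Finset.mem_univ _) h

lemma prod_cons_comp {N : ℕ} (w : Fin 2 → ℂ) (a : Fin 2) (t : Fin N → Fin 2) :
    ∏ s : Fin (N + 1), w ((Fin.cons a t : Fin (N + 1) → Fin 2) s)
      = w a * ∏ s : Fin N, w (t s) := by
  rw [Fin.prod_univ_succ]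
  simp [Fin.cons_succ, Fin.cons_zero]

lemma ptrace_pure (n : ℕ) (v : Fin 2 → ℂ) (hv : ∑ x, Complex.normSq (v x) = 1) :
    ptrace2 n (Matrix.of fun f g : Fin (n + 2) → Fin 2 =>
        (∏ s, v (f s)) * star (∏ s, v (g s)))
      = proj v ⊗ₖ proj v := by
  have h2 : ∑ x, v x * star (v x) = 1 := by
    simp only [Complex.star_def, Complex.mul_conj]; norm_cast
  have hsum : ∑ t : Fin n → Fin 2, ∏ s, (v (t s) * star (v (t s))) = 1 := by
    have h3 : ∑ t : Fin n → Fin 2, ∏ s, (v (t s) * star (v (t s)))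
        = ∏ s : Fin n, ∑ x, (v x * star (v x)) := by
      have := Finset.prod_univ_sum (κ := fun _ : Fin n => Fin 2)
        (fun _ => Finset.univ) (fun _ x => v x * star (v x))
      rw [Fintype.piFinset_univ] at this
      exact this.symm
    rw [h3, h2]
    exact Finset.prod_const_one
  ext p q
  simp only [ptrace2, Matrix.of_apply, proj, Matrix.kroneckerMap_apply]
  have step : ∀ t : Fin n → Fin 2,
      (∏ s : Fin (n+2), v ((Fin.cons p.1 (Fin.cons p.2 t) : Fin (n+2) → Fin 2) s)) *
        star (∏ s : Fin (n+2), v ((Fin.cons q.1 (Fin.cons q.2 t) : Fin (n+2) → Fin 2) s))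
      = (v p.1 * star (v q.1) * (v p.2 * star (v q.2)))
          * ∏ s, (v (t s) * star (v (t s))) := by
    intro t
    rw [prod_cons_comp, prod_cons_comp, prod_cons_comp, prod_cons_comp,
      Finset.prod_mul_distrib]
    simp only [star_mul', star_prod]
    ring
  simp only [step]
  rw [← Finset.mul_sum, hsum, mul_one]

lemma ptrace2_sum {k : ℕ} (n : ℕ) (c : Fin k → ℂ)
    (A : Fin k → Matrix (Fin (n + 2) → Fin 2) (Fin (n + 2) → Fin 2) ℂ) :
    ptrace2 n (∑ i, c i • A i) = ∑ i, c i • ptrace2 n (A i) := by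
  ext p q
  simp only [ptrace2, Matrix.of_apply, Matrix.sum_apply, Matrix.smul_apply, smul_eq_mul,
    Finset.mul_sum]
  exact Finset.sum_comm

/-- Every separable two-qubit density operator supported on the symmetric subspace admits a
decomposition `ρ = ∑ q_i |γ_i⟩⟨γ_i| ⊗ |γ_i⟩⟨γ_i|` into symmetric pure product states, and
consequently has a Bose-symmetric extension `ω = ∑ q_i |γ_i⟩⟨γ_i|^{⊗N}` to any number
`N = n+2 ≥ 2` of qubits: `ω` is a density operator supported on the symmetric subspace of
`(ℂ²)^{⊗N}` whose partial trace over the last `N−2` factors is `ρ`. -/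
theorem separable_symmetric_bose_extension (m : ℕ) (p : Fin m → ℝ)
    (α β : Fin m → Fin 2 → ℂ)
    (hp : ∀ i, 0 ≤ p i) (hps : ∑ i, p i = 1)
    (hα : ∀ i, ∑ x, Complex.normSq (α i x) = 1)
    (hβ : ∀ i, ∑ x, Complex.normSq (β i x) = 1)
    (ρ : Matrix (Fin 2 × Fin 2) (Fin 2 × Fin 2) ℂ)
    (hρ : ρ = ∑ i, ((p i : ℝ) : ℂ) • (proj (α i) ⊗ₖ proj (β i)))
    (hsupp : swapMat * ρ = ρ ∧ ρ * swapMat = ρ) :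
    ∃ (m' : ℕ) (q : Fin m' → ℝ) (γ : Fin m' → Fin 2 → ℂ),
      (∀ i, 0 ≤ q i) ∧ (∑ i, q i = 1) ∧ (∀ i, ∑ x, Complex.normSq (γ i x) = 1) ∧
      ρ = ∑ i, ((q i : ℝ) : ℂ) • (proj (γ i) ⊗ₖ proj (γ i)) ∧
      ∀ n : ℕ,
        (∑ i, ((q i : ℝ) : ℂ) • (Matrix.of fun f g : Fin (n + 2) → Fin 2 =>
            (∏ s, γ i (f s)) * star (∏ s, γ i (g s)))).PosSemidef ∧
        (∑ i, ((q i : ℝ) : ℂ) • (Matrix.of fun f g : Fin (n + 2) → Fin 2 =>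
            (∏ s, γ i (f s)) * star (∏ s, γ i (g s)))).trace = 1 ∧
        (∀ pp : Equiv.Perm (Fin (n + 2)),
          permMat (n + 2) pp * (∑ i, ((q i : ℝ) : ℂ) • (Matrix.of fun f g : Fin (n + 2) → Fin 2 =>
              (∏ s, γ i (f s)) * star (∏ s, γ i (g s))))
            = ∑ i, ((q i : ℝ) : ℂ) • (Matrix.of fun f g : Fin (n + 2) → Fin 2 =>
              (∏ s, γ i (f s)) * star (∏ s, γ i (g s))) ∧
          (∑ i, ((q i : ℝ) : ℂ) • (Matrix.of fun f g : Fin (n + 2) → Fin 2 =>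
              (∏ s, γ i (f s)) * star (∏ s, γ i (g s)))) * permMat (n + 2) pp
            = ∑ i, ((q i : ℝ) : ℂ) • (Matrix.of fun f g : Fin (n + 2) → Fin 2 =>
              (∏ s, γ i (f s)) * star (∏ s, γ i (g s)))) ∧
        ptrace2 n (∑ i, ((q i : ℝ) : ℂ) • (Matrix.of fun f g : Fin (n + 2) → Fin 2 =>
            (∏ s, γ i (f s)) * star (∏ s, γ i (g s)))) = ρ := by
  classical
  -- the "defect" of each product term
  set D : Fin m → ℂ := fun i => α i 0 * β i 1 - α i 1 * β i 0 with hDdef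
  -- trace identity
  have h2 : ρ.trace - (swapMat * ρ).trace = ∑ i, ((p i : ℝ) : ℂ) * (D i * star (D i)) := by
    conv_lhs => rw [hρ]
    rw [Matrix.mul_sum, Matrix.trace_sum, Matrix.trace_sum, ← Finset.sum_sub_distrib]
    refine Finset.sum_congr rfl fun i _ => ?_
    rw [Matrix.mul_smul, Matrix.trace_smul, Matrix.trace_smul, smul_eq_mul, smul_eq_mul,
      ← mul_sub, trace_diff]
  have h3 : ρ.trace - (swapMat * ρ).trace = 0 := by rw [hsupp.1, sub_self]
  have h4 : ∑ i, p i * Complex.normSq (D i) = 0 := by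
    have h5 : ∀ i, ((p i : ℝ) : ℂ) * (D i * star (D i))
        = ((p i * Complex.normSq (D i) : ℝ) : ℂ) := by
      intro i
      rw [Complex.star_def, Complex.mul_conj]
      push_cast
      ring
    have h6 := h2.symm.trans h3
    rw [Finset.sum_congr rfl (fun i _ => h5 i), ← Complex.ofReal_sum] at h6
    exact_mod_cast h6
  have h7 : ∀ i ∈ Finset.univ, p i * Complex.normSq (D i) = 0 :=
    (Finset.sum_eq_zero_iff_of_nonneg
      (fun i _ => mul_nonneg (hp i) (Complex.normSq_nonneg _))).mp h4
  have hprojeq : ∀ i, p i ≠ 0 → proj (β i) = proj (α i) := by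
    intro i hi
    have hD0 : Complex.normSq (D i) = 0 := by
      rcases mul_eq_zero.mp (h7 i (Finset.mem_univ i)) with h | h
      · exact absurd h hi
      · exact h
    have hD1 : D i = 0 := Complex.normSq_eq_zero.mp hD0
    refine proj_eq _ _ (hα i) (hβ i) ?_
    exact sub_eq_zero.mp hD1
  set γ : Fin m → Fin 2 → ℂ := fun i => if p i = 0 then ![1, 0] else α i with hγdef
  have hγi : ∀ i, p i ≠ 0 → γ i = α i := by
    intro i hi
    rw [hγdef]
    simp [hi]
  have hγn : ∀ i, ∑ x, Complex.normSq (γ i x) = 1 := by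
    intro i
    by_cases hi : p i = 0
    · rw [hγdef]
      simp [hi, Fin.sum_univ_two]
    · rw [hγi i hi]
      exact hα i
  have hterm : ∀ i, ((p i : ℝ) : ℂ) • (proj (γ i) ⊗ₖ proj (γ i))
      = ((p i : ℝ) : ℂ) • (proj (α i) ⊗ₖ proj (β i)) := by
    intro i
    by_cases hi : p i = 0
    · simp [hi]
    · rw [hγi i hi, hprojeq i hi]
  have hρ' : ρ = ∑ i, ((p i : ℝ) : ℂ) • (proj (γ i) ⊗ₖ proj (γ i)) := by
    rw [hρ]
    exact (Finset.sum_congr rfl fun i _ => hterm i).symm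
  refine ⟨m, p, γ, hp, hps, hγn, hρ', fun n => ⟨?_, ?_, ?_, ?_⟩⟩
  · exact psd_sum _ fun i => psd_smul_s8 (psd_pure _) (hp i)
  · rw [Matrix.trace_sum]
    have h8 : ∀ i ∈ Finset.univ, (((p i : ℝ) : ℂ) • (Matrix.of fun f g : Fin (n + 2) → Fin 2 =>
        (∏ s, γ i (f s)) * star (∏ s, γ i (g s)))).trace = ((p i : ℝ) : ℂ) := by
      intro i _
      rw [Matrix.trace_smul, trace_pure (γ i) (hγn i) (n + 2), smul_eq_mul, mul_one]
    rw [Finset.sum_congr rfl h8, ← Complex.ofReal_sum, hps, Complex.ofReal_one]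
  · intro pp
    constructor
    · rw [Matrix.mul_sum]
      refine Finset.sum_congr rfl fun i _ => ?_
      rw [Matrix.mul_smul, perm_left]
    · rw [Matrix.sum_mul]
      refine Finset.sum_congr rfl fun i _ => ?_
      rw [Matrix.smul_mul, perm_right]
  · rw [ptrace2_sum]
    have h9 : ∀ i ∈ Finset.univ, ((p i : ℝ) : ℂ) •
        ptrace2 n (Matrix.of fun f g : Fin (n + 2) → Fin 2 =>
          (∏ s, γ i (f s)) * star (∏ s, γ i (g s)))
        = ((p i : ℝ) : ℂ) • (proj (γ i) ⊗ₖ proj (γ i)) := by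
      intro i _
      rw [ptrace_pure n (γ i) (hγn i)]
    rw [Finset.sum_congr rfl h9]
    exact hρ'.symm
end

section
/- Any 3×3 complex matrix M of the form M(ρ)_{kl} = tr(L_k^{(j)} L_l^{(j)} ρ) for a density operator ρ can, by conjugation with a real orthogonal matrix arising from the adjoint action of SU(2), be brought to standard form M = D + iA where D is a real diagonal matrix with tr(D) = j(j+1) and iA is the anti-Hermitian traceless part. -/
open Matrix
open scoped ComplexOrder

private lemma diag3 (S : Matrix (Fin 3) (Fin 3) ℝ) (hS : S.IsHermitian) :
    ∃ R : Matrix (Fin 3) (Fin 3) ℝ, Rᵀ * R = 1 ∧ R.det = 1 ∧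
      ∃ d : Fin 3 → ℝ, R * S * Rᵀ = Matrix.diagonal d := by
  classical
  obtain ⟨V, eig, hVV, hVV', hspec⟩ :
      ∃ (V : Matrix (Fin 3) (Fin 3) ℝ) (eig : Fin 3 → ℝ),
        Vᵀ * V = 1 ∧ V * Vᵀ = 1 ∧ S = V * Matrix.diagonal eig * Vᵀ := by
    refine ⟨(hS.eigenvectorUnitary : Matrix (Fin 3) (Fin 3) ℝ), hS.eigenvalues, ?_, ?_, ?_⟩
    · have hVstar : star (hS.eigenvectorUnitary : Matrix (Fin 3) (Fin 3) ℝ)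
          = (hS.eigenvectorUnitary : Matrix (Fin 3) (Fin 3) ℝ)ᵀ :=
        Matrix.ext fun i j => star_trivial _
      rw [← hVstar]; exact (Matrix.mem_unitaryGroup_iff').mp hS.eigenvectorUnitary.2
    · have hVstar : star (hS.eigenvectorUnitary : Matrix (Fin 3) (Fin 3) ℝ)
          = (hS.eigenvectorUnitary : Matrix (Fin 3) (Fin 3) ℝ)ᵀ :=
        Matrix.ext fun i j => star_trivial _
      rw [← hVstar]; exact (Matrix.mem_unitaryGroup_iff).mp hS.eigenvectorUnitary.2
    · have hVstar : star (hS.eigenvectorUnitary : Matrix (Fin 3) (Fin 3) ℝ)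
          = (hS.eigenvectorUnitary : Matrix (Fin 3) (Fin 3) ℝ)ᵀ :=
        Matrix.ext fun i j => star_trivial _
      have := hS.spectral_theorem
      simpa only [RCLike.ofReal_real_eq_id, Function.comp_id, Function.id_comp, Unitary.conjStarAlgAut_apply, hVstar] using this
  have hdetV : V.det * V.det = 1 := by
    have := congrArg Matrix.det hVV
    rwa [Matrix.det_mul, Matrix.det_transpose, Matrix.det_one] at this
  let f : Fin 3 → ℝ := fun i => if i = 0 then V.det else 1
  have hff : ∀ i, f i * f i = 1 := by
    intro i; by_cases h : i = 0 <;> simp [f, h, hdetV]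
  let F : Matrix (Fin 3) (Fin 3) ℝ := Matrix.diagonal f
  have hFT : Fᵀ = F := Matrix.diagonal_transpose f
  have hFF : F * F = 1 := by
    show Matrix.diagonal f * Matrix.diagonal f = 1
    rw [Matrix.diagonal_mul_diagonal]
    ext i j
    rw [Matrix.diagonal_apply, Matrix.one_apply]
    by_cases h : i = j <;> simp [h, hff]
  refine ⟨F * Vᵀ, ?_, ?_, fun i => f i * eig i * f i, ?_⟩
  · rw [Matrix.transpose_mul, hFT, Matrix.transpose_transpose,
      mul_assoc, ← mul_assoc F, hFF, one_mul, hVV']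
  · rw [Matrix.det_mul, Matrix.det_transpose]
    have : F.det = V.det := by
      show (Matrix.diagonal f).det = V.det
      rw [Matrix.det_diagonal, Fin.prod_univ_three]
      have h1 : (1 : Fin 3) ≠ 0 := by decide
      have h2 : (2 : Fin 3) ≠ 0 := by decide
      simp [f, h1, h2]
    rw [this, hdetV]
  · have key : Vᵀ * S * V = Matrix.diagonal eig := by
      conv_lhs => rw [hspec]
      calc Vᵀ * (V * Matrix.diagonal eig * Vᵀ) * V
          = (Vᵀ * V) * Matrix.diagonal eig * (Vᵀ * V) := by noncomm_ring
        _ = _ := by rw [hVV, one_mul, mul_one]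
    rw [Matrix.transpose_mul, hFT, Matrix.transpose_transpose]
    calc F * Vᵀ * S * (V * F) = F * (Vᵀ * S * V) * F := by noncomm_ring
      _ = F * Matrix.diagonal eig * F := by rw [key]
      _ = Matrix.diagonal fun i => f i * eig i * f i := by
          show Matrix.diagonal f * _ * Matrix.diagonal f = _
          rw [Matrix.diagonal_mul_diagonal, Matrix.diagonal_mul_diagonal]

private lemma herm3 (M : Matrix (Fin 3) (Fin 3) ℂ)
    (hM : ∀ k l, M l k = starRingEnd ℂ (M k l)) :
    ∃ (R D A : Matrix (Fin 3) (Fin 3) ℝ),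
      Rᵀ * R = 1 ∧ R.det = 1 ∧
      (∀ k l, k ≠ l → D k l = 0) ∧
      D.trace = M.trace.re ∧
      Aᵀ = -A ∧
      (R.map (fun x : ℝ => (x : ℂ))) * M * (R.map (fun x : ℝ => (x : ℂ)))ᵀ
        = D.map (fun x : ℝ => (x : ℂ)) + Complex.I • A.map (fun x : ℝ => (x : ℂ)) := by
  classical
  let S : Matrix (Fin 3) (Fin 3) ℝ := Matrix.of fun k l => (M k l).re
  let T : Matrix (Fin 3) (Fin 3) ℝ := Matrix.of fun k l => (M k l).im
  have hS : S.IsHermitian := by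
    show Sᴴ = S
    ext k l
    rw [Matrix.conjTranspose_apply, star_trivial]
    show (M l k).re = (M k l).re
    rw [hM k l, Complex.conj_re]
  have hTanti : Tᵀ = -T := by
    ext k l
    simp only [Matrix.transpose_apply, Matrix.neg_apply]
    show (M l k).im = -(M k l).im
    rw [hM k l, Complex.conj_im]
  obtain ⟨R, hRorth, hRdet, d, hRd⟩ := diag3 S hS
  have hRR : R * Rᵀ = 1 := by
    have h1 : R.det ≠ 0 := by rw [hRdet]; exact one_ne_zero
    exact mul_eq_one_comm.mp hRorth
  refine ⟨R, Matrix.diagonal d, R * T * Rᵀ, hRorth, hRdet, ?_, ?_, ?_, ?_⟩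
  · intro k l hkl; exact Matrix.diagonal_apply_ne _ hkl
  · have h1 : (Matrix.diagonal d).trace = (R * S * Rᵀ).trace := by rw [hRd]
    have h2 : (R * S * Rᵀ).trace = S.trace := by
      rw [Matrix.trace_mul_comm (R * S) Rᵀ, ← mul_assoc, hRorth, one_mul]
    have h3 : S.trace = M.trace.re := by
      rw [Matrix.trace, Matrix.trace, Complex.re_sum]
      rfl
    rw [h1, h2, h3]
  · rw [Matrix.transpose_mul, Matrix.transpose_mul, Matrix.transpose_transpose, hTanti]
    noncomm_ring
  · have hMsplit : M = S.map (fun x : ℝ => (x : ℂ)) + Complex.I • T.map (fun x : ℝ => (x : ℂ)) := by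
      ext k l
      simp only [Matrix.add_apply, Matrix.smul_apply, Matrix.map_apply, smul_eq_mul]
      show M k l = ((M k l).re : ℂ) + Complex.I * ((M k l).im : ℂ)
      rw [mul_comm]
      exact (Complex.re_add_im (M k l)).symm
    have hmap : ∀ (X Y : Matrix (Fin 3) (Fin 3) ℝ),
        (X * Y).map (fun x : ℝ => (x : ℂ))
          = X.map (fun x : ℝ => (x : ℂ)) * Y.map (fun x : ℝ => (x : ℂ)) :=
      fun X Y => Matrix.map_mul (f := Complex.ofRealHom)
    have htmap : (R.map (fun x : ℝ => (x : ℂ)))ᵀ = Rᵀ.map (fun x : ℝ => (x : ℂ)) :=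
      Matrix.transpose_map.symm
    rw [hMsplit, htmap, mul_add, add_mul, mul_smul_comm, smul_mul_assoc,
      ← hmap, ← hmap, ← hmap, ← hmap, hRd]

/-- Standard form: the second-moment matrix `M(ρ)_{kl} = tr(L_k L_l ρ)` of a density operator
`ρ` of a spin-`j` system (`j = ℓ/2`, dimension `ℓ+1`) can be brought, by conjugation with a
rotation `R ∈ SO(3)` arising from the adjoint action of SU(2), to the standard form
`R M Rᵀ = D + iA` with `D` real diagonal, `tr(D) = j(j+1)`, and `A` real antisymmetric
(so that `iA` is the traceless non-symmetric part). -/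
theorem expectation_value_matrix_standard_form (ℓ : ℕ)
    (L : Fin 3 → Matrix (Fin (ℓ + 1)) (Fin (ℓ + 1)) ℂ)
    (herm : ∀ k, (L k).IsHermitian)
    (comm : ∀ k l, L k * L l - L l * L k =
      Complex.I • ∑ m, (leviCivita k l m : ℂ) • L m)
    (casimir : ∑ k, L k * L k
      = ((((ℓ : ℝ) / 2) * ((ℓ : ℝ) / 2 + 1) : ℝ) : ℂ) • (1 : Matrix (Fin (ℓ + 1)) (Fin (ℓ + 1)) ℂ))
    (ρ : Matrix (Fin (ℓ + 1)) (Fin (ℓ + 1)) ℂ)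
    (hρ : ρ.PosSemidef) (htr : ρ.trace = 1) :
    ∃ (R D A : Matrix (Fin 3) (Fin 3) ℝ),
      Rᵀ * R = 1 ∧ R.det = 1 ∧
      (∀ k l, k ≠ l → D k l = 0) ∧
      D.trace = ((ℓ : ℝ) / 2) * ((ℓ : ℝ) / 2 + 1) ∧
      Aᵀ = -A ∧
      (R.map (fun x : ℝ => (x : ℂ))) *
          (Matrix.of fun k l => (L k * L l * ρ).trace : Matrix (Fin 3) (Fin 3) ℂ) *
          (R.map (fun x : ℝ => (x : ℂ)))ᵀ
        = D.map (fun x : ℝ => (x : ℂ)) + Complex.I • A.map (fun x : ℝ => (x : ℂ)) := by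
  have hMherm : ∀ k l, (Matrix.of fun k l => (L k * L l * ρ).trace : Matrix (Fin 3) (Fin 3) ℂ) l k
      = starRingEnd ℂ ((Matrix.of fun k l => (L k * L l * ρ).trace : Matrix (Fin 3) (Fin 3) ℂ) k l) := by
    intro k l
    show (L l * L k * ρ).trace = starRingEnd ℂ ((L k * L l * ρ).trace)
    have h1 : starRingEnd ℂ ((L k * L l * ρ).trace) = ((L k * L l * ρ)ᴴ).trace := by
      rw [Matrix.trace_conjTranspose]; rfl
    have h2 : (L k * L l * ρ)ᴴ = ρ * (L l * L k) := by
      rw [Matrix.conjTranspose_mul, Matrix.conjTranspose_mul, hρ.1, (herm k).eq, (herm l).eq]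
    rw [h1, h2, Matrix.trace_mul_comm]
  obtain ⟨R, D, A, hRorth, hRdet, hDdiag, hDtr, hAanti, hmain⟩ :=
    herm3 (Matrix.of fun k l => (L k * L l * ρ).trace) hMherm
  refine ⟨R, D, A, hRorth, hRdet, hDdiag, ?_, hAanti, hmain⟩
  rw [hDtr]
  have hsum : (Matrix.of fun k l => (L k * L l * ρ).trace : Matrix (Fin 3) (Fin 3) ℂ).trace
      = ((((ℓ : ℝ) / 2) * ((ℓ : ℝ) / 2 + 1) : ℝ) : ℂ) := by
    have : (Matrix.of fun k l => (L k * L l * ρ).trace : Matrix (Fin 3) (Fin 3) ℂ).trace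
        = ((∑ k, L k * L k) * ρ).trace := by
      rw [Finset.sum_mul, Matrix.trace_sum]
      rfl
    rw [this, casimir, Matrix.smul_mul, Matrix.trace_smul, one_mul, htr, smul_eq_mul, mul_one]
  rw [hsum, Complex.ofReal_re]
end
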